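/- arXiv:1904.09284 — 7 statements merged into one kernel-verified Lean document; each statement's English description precedes it below -/
import Mathlib

section
/- If n balls are thrown independently and uniformly at random into n bins, and N_k denotes the total number of balls in the k most loaded bins, then for sufficiently large n and any k ≤ n/2, the expectation of N_k is at least 1.5k. -/
open Finset

/-- The number of balls in the `k` most loaded bins, when the balls-to-bins
assignment is `ω : Fin n → Fin n`: the maximum, over all `k`-sets of bins,
of the total load of those bins. -/
def ballsInTopBins (n k : ℕ) (ω : Fin n → Fin n) : ℕ :=
  (Finset.univ.powersetCard k).sup
    (fun T => ∑ b ∈ T, (Finset.univ.filter (fun i => ω i = b)).card)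

namespace BTB

variable {n m : ℕ}

def Sm (n m : ℕ) : Finset (Fin n) := univ.filter (fun j => (j : ℕ) < m)

def BB (n m : ℕ) (ω : Fin n → Fin n) : Finset (Fin n) := (Sm n m).image ω

def XX (n m : ℕ) (ω : Fin n → Fin n) : ℕ := (univ.filter (fun i => ω i ∈ BB n m ω)).card

lemma card_Sm (hm : m ≤ n) : (Sm n m).card = m := by
  have h : (Sm n m).image Fin.val = Finset.range m := by
    ext a
    simp only [Sm, mem_image, mem_filter, mem_univ, true_and, mem_range]
    constructor
    · rintro ⟨j, hj, rfl⟩; exact hj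
    · intro ha; exact ⟨⟨a, lt_of_lt_of_le ha hm⟩, ha, rfl⟩
  have h2 := Finset.card_image_of_injective (Sm n m) Fin.val_injective
  rw [h, Finset.card_range] at h2
  omega

lemma count_pi (t : Fin n → Finset (Fin n)) :
    (univ.filter fun ω : Fin n → Fin n => ∀ j, ω j ∈ t j).card = ∏ j, (t j).card := by
  rw [show (univ.filter fun ω : Fin n → Fin n => ∀ j, ω j ∈ t j) = Fintype.piFinset t by
    ext ω; simp [Fintype.mem_piFinset]]
  exact Fintype.card_piFinset t

lemma prod_ite_card {α : Type*} [DecidableEq α] (u s : Finset α) (hs : s ⊆ u) (a b : ℕ) :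
    (∏ j ∈ u, if j ∈ s then a else b) = a ^ s.card * b ^ (u.card - s.card) := by
  rw [← Finset.prod_filter_mul_prod_filter_not u (· ∈ s)]
  have h1 : u.filter (· ∈ s) = s := by
    ext x; simp only [mem_filter]; exact ⟨fun h => h.2, fun h => ⟨hs h, h⟩⟩
  have h2 : (u.filter (fun x => ¬ x ∈ s)).card = u.card - s.card := by
    have := Finset.card_filter_add_card_filter_not (s := u) (p := (· ∈ s))
    rw [h1] at this; omega
  rw [Finset.prod_congr rfl (fun x hx => if_pos (mem_filter.1 hx).2),
    Finset.prod_congr rfl (fun x hx => if_neg (mem_filter.1 hx).2),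
    Finset.prod_const, Finset.prod_const, h1, h2]

lemma count_miss (hm : m ≤ n) (b : Fin n) :
    (univ.filter fun ω : Fin n → Fin n => ∀ j ∈ Sm n m, ω j ≠ b).card
      = (n-1)^m * n^(n-m) := by
  have he : (univ.filter fun ω : Fin n → Fin n => ∀ j ∈ Sm n m, ω j ≠ b)
      = univ.filter fun ω => ∀ j, ω j ∈ (if j ∈ Sm n m then ({b}ᶜ : Finset (Fin n)) else univ) := by
    apply filter_congr; intro ω _
    constructor
    · intro h j; split
      · next hj => simpa using h j hj
      · simp
    · intro h j hj; have := h j; rw [if_pos hj] at this; simpa using this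
  rw [he, count_pi]
  have hc : ∀ j : Fin n, ((if j ∈ Sm n m then ({b}ᶜ : Finset (Fin n)) else univ)).card
      = if j ∈ Sm n m then n - 1 else n := by
    intro j; split <;> simp [Finset.card_compl]
  rw [Finset.prod_congr rfl (fun j _ => hc j),
    prod_ite_card univ (Sm n m) (subset_univ _), card_Sm hm, card_univ, Fintype.card_fin]

lemma count_missboth (hm : m ≤ n) {b b' : Fin n} (hbb : b ≠ b') :
    (univ.filter fun ω : Fin n → Fin n => ∀ j ∈ Sm n m, ω j ≠ b ∧ ω j ≠ b').card
      = (n-2)^m * n^(n-m) := by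
  have he : (univ.filter fun ω : Fin n → Fin n => ∀ j ∈ Sm n m, ω j ≠ b ∧ ω j ≠ b')
      = univ.filter fun ω => ∀ j, ω j ∈
          (if j ∈ Sm n m then ({b, b'}ᶜ : Finset (Fin n)) else univ) := by
    apply filter_congr; intro ω _
    constructor
    · intro h j; split
      · next hj => have := h j hj; simp [this.1, this.2]
      · simp
    · intro h j hj; have := h j; rw [if_pos hj] at this
      simp only [mem_compl, mem_insert, mem_singleton] at this
      push_neg at this; exact this
  rw [he, count_pi]
  have hc : ∀ j : Fin n, ((if j ∈ Sm n m then ({b, b'}ᶜ : Finset (Fin n)) else univ)).card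
      = if j ∈ Sm n m then n - 2 else n := by
    intro j; split
    · rw [Finset.card_compl, Finset.card_pair hbb, Fintype.card_fin]
    · simp
  rw [Finset.prod_congr rfl (fun j _ => hc j),
    prod_ite_card univ (Sm n m) (subset_univ _), card_Sm hm, card_univ, Fintype.card_fin]

lemma count_eq_i (i : Fin n) (hi : i ∉ Sm n m) (hm : m ≤ n) :
    (univ.filter fun ω : Fin n → Fin n => ∀ j ∈ Sm n m, ω j ≠ ω i).card
      = (n-1)^m * n^(n-m) := by
  have hmn : m < n := by
    have h1 : ¬ ((i : ℕ) < m) := by simpa [Sm] using hi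
    have := i.isLt; omega
  rw [Finset.card_eq_sum_card_fiberwise
    (f := fun ω : Fin n → Fin n => ω i) (t := univ) (fun ω _ => mem_univ _)]
  have key : ∀ b : Fin n,
      ((univ.filter fun ω : Fin n → Fin n => ∀ j ∈ Sm n m, ω j ≠ ω i).filter
        (fun ω => ω i = b)).card = (n-1)^m * n^(n-1-m) := by
    intro b
    have he : (univ.filter fun ω : Fin n → Fin n => ∀ j ∈ Sm n m, ω j ≠ ω i).filter
        (fun ω => ω i = b)
        = univ.filter fun ω => ∀ j, ω j ∈
            (if j = i then ({b} : Finset (Fin n)) else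
              if j ∈ Sm n m then ({b}ᶜ : Finset (Fin n)) else univ) := by
      rw [Finset.filter_filter]
      apply filter_congr; intro ω _
      constructor
      · rintro ⟨h1, h2⟩ j
        by_cases hji : j = i
        · subst hji; simp [h2]
        · rw [if_neg hji]
          split
          · next hj =>
            have := h1 j hj; rw [h2] at this; simpa using this
          · simp
      · intro h
        have hii := h i; rw [if_pos rfl] at hii
        have hib : ω i = b := by simpa using hii
        refine ⟨fun j hj => ?_, hib⟩
        have hji : j ≠ i := fun hc => hi (hc ▸ hj)
        have := h j; rw [if_neg hji, if_pos hj] at this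
        rw [hib]; simpa using this
    rw [he, count_pi]
    have hc : ∀ j : Fin n,
        ((if j = i then ({b} : Finset (Fin n)) else
          if j ∈ Sm n m then ({b}ᶜ : Finset (Fin n)) else univ)).card
        = if j = i then 1 else if j ∈ Sm n m then n - 1 else n := by
      intro j
      split
      · simp
      · split <;> simp [Finset.card_compl]
    rw [Finset.prod_congr rfl (fun j _ => hc j)]
    rw [← Finset.mul_prod_erase univ _ (mem_univ i), if_pos rfl, one_mul]
    have hsub : Sm n m ⊆ univ.erase i := fun j hj =>
      mem_erase.2 ⟨fun hc => hi (hc ▸ hj), mem_univ _⟩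
    rw [Finset.prod_congr rfl (fun j hj => by
        rw [if_neg (mem_erase.1 hj).1]),
      prod_ite_card (univ.erase i) (Sm n m) hsub, card_Sm hm,
      Finset.card_erase_of_mem (mem_univ i), card_univ, Fintype.card_fin]
  rw [Finset.sum_congr rfl (fun b _ => key b), Finset.sum_const, card_univ, Fintype.card_fin,
    smul_eq_mul]
  have : n * n^(n-1-m) = n^(n-m) := by
    rw [← pow_succ']
    congr 1; omega
  rw [mul_comm ((n-1)^m) (n^(n-1-m)), ← mul_assoc, this, mul_comm]

lemma card_Omega : (univ : Finset (Fin n → Fin n)).card = n ^ n := by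
  rw [card_univ, Fintype.card_fun, Fintype.card_fin]

lemma not_mem_BB (b : Fin n) (ω : Fin n → Fin n) :
    (b ∉ BB n m ω) ↔ ∀ j ∈ Sm n m, ω j ≠ b := by
  simp only [BB, mem_image, not_exists]
  push_neg
  rfl

lemma count_notmem (hm : m ≤ n) (b : Fin n) :
    (univ.filter fun ω : Fin n → Fin n => b ∉ BB n m ω).card = (n-1)^m * n^(n-m) := by
  rw [filter_congr (fun ω _ => not_mem_BB b ω), count_miss hm]

lemma count_notmem2 (hm : m ≤ n) {b b' : Fin n} (hbb : b ≠ b') :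
    (univ.filter fun ω : Fin n → Fin n => b ∉ BB n m ω ∧ b' ∉ BB n m ω).card
      = (n-2)^m * n^(n-m) := by
  have he : (univ.filter fun ω : Fin n → Fin n => b ∉ BB n m ω ∧ b' ∉ BB n m ω)
      = (univ.filter fun ω : Fin n → Fin n => ∀ j ∈ Sm n m, ω j ≠ b ∧ ω j ≠ b') := by
    apply filter_congr; intro ω _
    rw [not_mem_BB, not_mem_BB]
    constructor
    · rintro ⟨h1, h2⟩ j hj; exact ⟨h1 j hj, h2 j hj⟩
    · intro h; exact ⟨fun j hj => (h j hj).1, fun j hj => (h j hj).2⟩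
  rw [he, count_missboth hm hbb]

lemma sumX (hm : m ≤ n) :
    (∑ ω : Fin n → Fin n, XX n m ω) + (n - m) * ((n-1)^m * n^(n-m)) = n * n^n := by
  classical
  set miss : Fin n → ℕ := fun i =>
    (univ.filter fun ω : Fin n → Fin n => ∀ j ∈ Sm n m, ω j ≠ ω i).card with hmiss
  set hit : Fin n → ℕ := fun i =>
    (univ.filter fun ω : Fin n → Fin n => ω i ∈ BB n m ω).card with hhit
  have hswap : (∑ ω : Fin n → Fin n, XX n m ω) = ∑ i : Fin n, hit i := by
    simp only [XX, Finset.card_filter, hhit]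
    rw [Finset.sum_comm]
  have hpair : ∀ i : Fin n, hit i + miss i = n ^ n := by
    intro i
    have h := Finset.card_filter_add_card_filter_not
      (s := (univ : Finset (Fin n → Fin n))) (p := fun ω => ω i ∈ BB n m ω)
    rw [card_Omega] at h
    have hmeq : miss i = (univ.filter fun ω : Fin n → Fin n => ¬ (ω i ∈ BB n m ω)).card := by
      apply congrArg Finset.card
      apply filter_congr
      intro ω _
      exact (not_mem_BB (ω i) ω).symm
    rw [hmeq]
    exact h
  have hmiss_in : ∀ i ∈ Sm n m, miss i = 0 := by
    intro i hi
    rw [hmiss]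
    simp only [Finset.card_eq_zero]
    apply Finset.filter_eq_empty_iff.2
    intro ω _
    push_neg
    exact ⟨i, hi, rfl⟩
  have hmiss_out : ∀ i ∈ (Sm n m)ᶜ, miss i = (n-1)^m * n^(n-m) := by
    intro i hi
    exact count_eq_i i (mem_compl.1 hi) hm
  have hsummiss : (∑ i : Fin n, miss i) = (n - m) * ((n-1)^m * n^(n-m)) := by
    rw [← Finset.sum_add_sum_compl (Sm n m) miss,
      Finset.sum_congr rfl hmiss_in, Finset.sum_congr rfl hmiss_out,
      Finset.sum_const, Finset.sum_const, smul_eq_mul, smul_eq_mul,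
      Finset.card_compl, card_Sm hm, Fintype.card_fin]
    omega
  have : (∑ i : Fin n, hit i) + (∑ i : Fin n, miss i) = n * n^n := by
    rw [← Finset.sum_add_distrib, Finset.sum_congr rfl (fun i _ => hpair i),
      Finset.sum_const, card_univ, Fintype.card_fin, smul_eq_mul]
  rw [hswap, ← hsummiss]
  exact this

lemma sumB (hm : m ≤ n) :
    (∑ ω : Fin n → Fin n, (BB n m ω).card) + n * ((n-1)^m * n^(n-m)) = n * n^n := by
  classical
  have hswap : (∑ ω : Fin n → Fin n, (BB n m ω).card)
      = ∑ b : Fin n, (univ.filter fun ω : Fin n → Fin n => b ∈ BB n m ω).card := by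
    have : ∀ ω : Fin n → Fin n, (BB n m ω).card
        = ∑ b : Fin n, if b ∈ BB n m ω then 1 else 0 := by
      intro ω
      rw [Finset.sum_boole]
      simp only [Nat.cast_id]
      congr 1
      ext b; simp
    rw [Finset.sum_congr rfl (fun ω _ => this ω), Finset.sum_comm]
    congr 1
    ext b
    rw [Finset.card_filter]
  have hpair : ∀ b : Fin n,
      (univ.filter fun ω : Fin n → Fin n => b ∈ BB n m ω).card + (n-1)^m * n^(n-m) = n^n := by
    intro b
    rw [← count_notmem hm b, ← card_Omega (n := n)]
    exact Finset.card_filter_add_card_filter_not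
      (s := (univ : Finset (Fin n → Fin n))) (p := fun ω => b ∈ BB n m ω)
  rw [hswap]
  calc (∑ b : Fin n, (univ.filter fun ω : Fin n → Fin n => b ∈ BB n m ω).card)
        + n * ((n-1)^m * n^(n-m))
      = ∑ b : Fin n, ((univ.filter fun ω : Fin n → Fin n => b ∈ BB n m ω).card
        + (n-1)^m * n^(n-m)) := by
        rw [Finset.sum_add_distrib, Finset.sum_const, card_univ, Fintype.card_fin, smul_eq_mul]
    _ = ∑ b : Fin n, n^n := Finset.sum_congr rfl (fun b _ => hpair b)
    _ = n * n^n := by rw [Finset.sum_const, card_univ, Fintype.card_fin, smul_eq_mul]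

lemma sumB2 (hm : m ≤ n) :
    (∑ ω : Fin n → Fin n, ((BB n m ω).card)^2) + 2 * n^2 * ((n-1)^m * n^(n-m))
      = n^2 * n^n + n * ((n-1)^m * n^(n-m)) + n * (n-1) * ((n-2)^m * n^(n-m)) := by
  classical
  set m1 : ℕ := (n-1)^m * n^(n-m) with hm1
  set m2 : ℕ := (n-2)^m * n^(n-m) with hm2
  set H : Fin n → Fin n → ℕ := fun b b' =>
    (univ.filter fun ω : Fin n → Fin n => b ∈ BB n m ω ∧ b' ∈ BB n m ω).card with hH
  have hswap : (∑ ω : Fin n → Fin n, ((BB n m ω).card)^2)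
      = ∑ b : Fin n, ∑ b' : Fin n, H b b' := by
    have hsq : ∀ ω : Fin n → Fin n, ((BB n m ω).card)^2
        = ∑ b : Fin n, ∑ b' : Fin n,
          (if b ∈ BB n m ω ∧ b' ∈ BB n m ω then 1 else 0) := by
      intro ω
      have hcard : (BB n m ω).card = ∑ b : Fin n, if b ∈ BB n m ω then 1 else 0 := by
        rw [Finset.sum_boole]
        simp only [Nat.cast_id]
        congr 1
        ext b; simp
      rw [hcard, sq, Finset.sum_mul_sum]
      apply Finset.sum_congr rfl; intro b _
      apply Finset.sum_congr rfl; intro b' _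
      by_cases h1 : b ∈ BB n m ω <;> by_cases h2 : b' ∈ BB n m ω <;> simp [h1, h2]
    rw [Finset.sum_congr rfl (fun ω _ => hsq ω), Finset.sum_comm]
    apply Finset.sum_congr rfl; intro b _
    rw [Finset.sum_comm]
    apply Finset.sum_congr rfl; intro b' _
    simp only [hH]
    rw [Finset.card_filter]
  have hpair : ∀ b b' : Fin n,
      H b b' + m1 + m1 = n^n + (if b = b' then m1 else m2) := by
    intro b b'
    have hA : H b b' + (univ.filter fun ω : Fin n → Fin n =>
        ¬(b ∈ BB n m ω ∧ b' ∈ BB n m ω)).card = n^n := by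
      rw [← card_Omega (n := n)]
      exact Finset.card_filter_add_card_filter_not
        (s := (univ : Finset (Fin n → Fin n))) (p := fun ω => b ∈ BB n m ω ∧ b' ∈ BB n m ω)
    have hU : (univ.filter fun ω : Fin n → Fin n => ¬(b ∈ BB n m ω ∧ b' ∈ BB n m ω))
        = (univ.filter fun ω : Fin n → Fin n => b ∉ BB n m ω)
          ∪ (univ.filter fun ω : Fin n → Fin n => b' ∉ BB n m ω) := by
      rw [← Finset.filter_or]
      apply filter_congr; intro ω _
      tauto
    have hI : (univ.filter fun ω : Fin n → Fin n => b ∉ BB n m ω)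
          ∩ (univ.filter fun ω : Fin n → Fin n => b' ∉ BB n m ω)
        = (univ.filter fun ω : Fin n → Fin n => b ∉ BB n m ω ∧ b' ∉ BB n m ω) := by
      rw [← Finset.filter_and]
    have hcui := Finset.card_union_add_card_inter
      (univ.filter fun ω : Fin n → Fin n => b ∉ BB n m ω)
      (univ.filter fun ω : Fin n → Fin n => b' ∉ BB n m ω)
    rw [hI, count_notmem hm b, count_notmem hm b'] at hcui
    by_cases hbb : b = b'
    · subst hbb
      rw [if_pos rfl]
      have : (univ.filter fun ω : Fin n → Fin n => b ∉ BB n m ω ∧ b ∉ BB n m ω).card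
          = m1 := by
        rw [filter_congr (fun ω _ => by tauto), count_notmem hm b]
      rw [this] at hcui
      rw [hU] at hA
      omega
    · rw [if_neg hbb]
      rw [count_notmem2 hm hbb] at hcui
      rw [hU] at hA
      omega
  have hsum2 : ∀ b : Fin n, (∑ b' : Fin n, (if b = b' then m1 else m2))
      = m1 + (n-1) * m2 := by
    intro b
    rw [← Finset.add_sum_erase univ _ (mem_univ b), if_pos rfl]
    congr 1
    rw [Finset.sum_congr rfl (fun b' hb' => if_neg (fun h => (mem_erase.1 hb').1 h.symm)),
      Finset.sum_const, smul_eq_mul, Finset.card_erase_of_mem (mem_univ b), card_univ,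
      Fintype.card_fin]
  have key : (∑ b : Fin n, ∑ b' : Fin n, H b b') + n^2 * m1 + n^2 * m1
      = n^2 * n^n + n * (m1 + (n-1) * m2) := by
    have lhs : (∑ b : Fin n, ∑ b' : Fin n, (H b b' + m1 + m1))
        = (∑ b : Fin n, ∑ b' : Fin n, H b b') + n^2 * m1 + n^2 * m1 := by
      simp only [Finset.sum_add_distrib, Finset.sum_const, card_univ, Fintype.card_fin,
        smul_eq_mul]
      ring
    have rhs : (∑ b : Fin n, ∑ b' : Fin n, (n^n + (if b = b' then m1 else m2)))
        = n^2 * n^n + n * (m1 + (n-1) * m2) := by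
      simp only [Finset.sum_add_distrib, Finset.sum_const, card_univ, Fintype.card_fin,
        smul_eq_mul]
      rw [Finset.sum_congr rfl (fun b (_ : b ∈ univ) => hsum2 b), Finset.sum_const,
        card_univ, Fintype.card_fin, smul_eq_mul]
      ring
    rw [← lhs, Finset.sum_congr rfl (fun b _ => Finset.sum_congr rfl
      (fun b' _ => hpair b b')), rhs]
  rw [hswap]
  rw [show n * (m1 + (n-1) * m2) = n * m1 + n * (n-1) * m2 by ring] at key
  linarith [key]


lemma pointwise {k : ℕ} (hk : k ≤ n) (ω : Fin n → Fin n) (hcard : (BB n m ω).card ≤ k) :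
    XX n m ω ≤ ballsInTopBins n k ω := by
  obtain ⟨T, hBT, -, hT⟩ := Finset.exists_subsuperset_card_eq
    (Finset.subset_univ (BB n m ω)) hcard (by simpa using hk)
  have h1 : XX n m ω ≤ (univ.filter fun i => ω i ∈ T).card := by
    apply card_le_card
    intro i hi
    simp only [mem_filter] at hi ⊢
    exact ⟨hi.1, hBT hi.2⟩
  have h2 : (univ.filter fun i => ω i ∈ T).card
      = ∑ b ∈ T, (univ.filter fun i => ω i = b).card := by
    rw [Finset.card_eq_sum_card_fiberwise
      (s := univ.filter fun i => ω i ∈ T) (f := ω) (t := T) (fun i hi => (mem_filter.1 hi).2)]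
    apply Finset.sum_congr rfl
    intro b hb
    congr 1
    rw [Finset.filter_filter]
    apply filter_congr
    intro i _
    constructor
    · exact fun h => h.2
    · exact fun h => ⟨h ▸ hb, h⟩
  have h3 : (∑ b ∈ T, (univ.filter fun i => ω i = b).card) ≤ ballsInTopBins n k ω :=
    Finset.le_sup (f := fun T => ∑ b ∈ T, (univ.filter fun i => ω i = b).card)
      (Finset.mem_powersetCard_univ.2 hT)
  omega

lemma XX_le (ω : Fin n → Fin n) : XX n m ω ≤ n := by
  have := Finset.card_filter_le (univ : Finset (Fin n)) (fun i => ω i ∈ BB n m ω)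
  simpa [XX] using this

lemma exp_series_bound {y : ℝ} (h0 : 0 ≤ y) (h1 : y ≤ 1) :
    |Real.exp (-y) - (1 - y + y^2/2 - y^3/6)| ≤ 5*y^4/96 := by
  have hb := Real.exp_bound (x := -y) (by rwa [abs_neg, abs_of_nonneg h0]) (n := 4) (by norm_num)
  have hsum : (∑ i ∈ Finset.range 4, (-y)^i / (Nat.factorial i)) = 1 - y + y^2/2 - y^3/6 := by
    rw [Finset.sum_range_succ, Finset.sum_range_succ, Finset.sum_range_succ,
      Finset.sum_range_succ, Finset.sum_range_zero]
    norm_num [Nat.factorial]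
    ring
  rw [hsum] at hb
  rw [abs_neg, abs_of_nonneg h0] at hb
  calc |Real.exp (-y) - (1 - y + y^2/2 - y^3/6)| ≤ y^4 * ((4+1) / (Nat.factorial 4 * 4)) := by
        exact_mod_cast hb
    _ = 5*y^4/96 := by norm_num [Nat.factorial]; ring
  
lemma exp_quad {y : ℝ} (h0 : 0 ≤ y) (h1 : y ≤ 1) : Real.exp (-y) ≤ 1 - y + y^2/2 := by
  have h := abs_le.1 (exp_series_bound h0 h1)
  nlinarith [pow_le_pow_left₀ h0 h1 4, pow_le_pow_left₀ h0 h1 3, sq_nonneg y,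
    mul_nonneg (mul_nonneg h0 h0) h0]

lemma exp_quartic {y : ℝ} (h0 : 0 ≤ y) (h1 : y ≤ 1) :
    1 - y + y^2/2 - y^3/6 - 5*y^4/96 ≤ Real.exp (-y) := by
  have h := abs_le.1 (exp_series_bound h0 h1)
  linarith [h.1]

lemma base_le_exp {n : ℕ} (hn : 1 ≤ n) (m : ℕ) :
    (((n:ℝ)-1)/(n:ℝ))^m ≤ Real.exp (-(m:ℝ)/(n:ℝ)) := by
  have hb : (1:ℝ) ≤ n := by exact_mod_cast hn
  have hb0 : (0:ℝ) < n := by linarith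
  have h1 : ((n:ℝ)-1)/(n:ℝ) ≤ Real.exp (-(1:ℝ)/(n:ℝ)) := by
    have := Real.add_one_le_exp (-(1:ℝ)/(n:ℝ))
    have he : ((n:ℝ)-1)/(n:ℝ) = -(1:ℝ)/(n:ℝ) + 1 := by field_simp; ring
    linarith
  have h0 : (0:ℝ) ≤ ((n:ℝ)-1)/(n:ℝ) := div_nonneg (by linarith) (by linarith)
  calc (((n:ℝ)-1)/(n:ℝ))^m ≤ (Real.exp (-(1:ℝ)/(n:ℝ)))^m := pow_le_pow_left₀ h0 h1 m
    _ = Real.exp (-(m:ℝ)/(n:ℝ)) := by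
        rw [← Real.exp_nat_mul]
        congr 1
        ring

lemma exp_le_base {n : ℕ} (hn : 2 ≤ n) (m : ℕ) :
    Real.exp (-(m:ℝ)/((n:ℝ)-1)) ≤ (((n:ℝ)-1)/(n:ℝ))^m := by
  have hb : (2:ℝ) ≤ n := by exact_mod_cast hn
  have h1 : Real.exp (-(1:ℝ)/((n:ℝ)-1)) ≤ ((n:ℝ)-1)/(n:ℝ) := by
    have h := Real.add_one_le_exp ((1:ℝ)/((n:ℝ)-1))
    have hb1 : (0:ℝ) < (n:ℝ) - 1 := by linarith
    have hpos : (0:ℝ) < 1/((n:ℝ)-1) + 1 := by positivity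
    have hinv : Real.exp (-(1:ℝ)/((n:ℝ)-1)) = (Real.exp ((1:ℝ)/((n:ℝ)-1)))⁻¹ := by
      rw [← Real.exp_neg]
      congr 1
      ring
    rw [hinv]
    have h2 : (Real.exp ((1:ℝ)/((n:ℝ)-1)))⁻¹ ≤ (1/((n:ℝ)-1) + 1)⁻¹ := by
      apply inv_anti₀ hpos
      linarith
    have h3 : (1/((n:ℝ)-1) + 1)⁻¹ = ((n:ℝ)-1)/(n:ℝ) := by
      rw [show 1/((n:ℝ)-1) + 1 = (n:ℝ)/((n:ℝ)-1) by field_simp; ring]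
      rw [inv_div]
    rw [h3] at h2
    linarith
  have h0 : (0:ℝ) ≤ Real.exp (-(1:ℝ)/((n:ℝ)-1)) := (Real.exp_pos _).le
  calc Real.exp (-(m:ℝ)/((n:ℝ)-1)) = (Real.exp (-(1:ℝ)/((n:ℝ)-1)))^m := by
        rw [← Real.exp_nat_mul]
        congr 1
        ring
    _ ≤ (((n:ℝ)-1)/(n:ℝ))^m := pow_le_pow_left₀ h0 h1 m

lemma cast_miss1 {n m : ℕ} (hn : 1 ≤ n) (hm : m ≤ n) :
    (((n-1)^m * n^(n-m) : ℕ) : ℝ) = (n:ℝ)^n * (((n:ℝ)-1)/(n:ℝ))^m := by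
  have hb0 : (0:ℝ) < n := by exact_mod_cast hn
  have hc : ((n-1 : ℕ) : ℝ) = (n:ℝ) - 1 := by
    push_cast [Nat.cast_sub hn]
    ring
  push_cast [hc]
  have hsplit : (n:ℝ)^n = (n:ℝ)^(n-m) * (n:ℝ)^m := by
    rw [← pow_add]
    congr 1
    omega
  rw [hsplit, div_pow]
  field_simp

lemma cast_miss2 {n m : ℕ} (hn : 2 ≤ n) (hm : m ≤ n) :
    (((n-2)^m * n^(n-m) : ℕ) : ℝ) = (n:ℝ)^n * (((n:ℝ)-2)/(n:ℝ))^m := by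
  have hb0 : (0:ℝ) < n := by exact_mod_cast (by omega : 1 ≤ n)
  have hc : ((n-2 : ℕ) : ℝ) = (n:ℝ) - 2 := by
    push_cast [Nat.cast_sub hn]
    ring
  push_cast [hc]
  have hsplit : (n:ℝ)^n = (n:ℝ)^(n-m) * (n:ℝ)^m := by
    rw [← pow_add]
    congr 1
    omega
  rw [hsplit, div_pow]
  field_simp


lemma regime1 {n k : ℕ} (hn : 1 ≤ n) (hk : 25 * k ≤ 9 * n) :
    (3/2 : ℝ) * k * (n:ℝ)^n ≤ ∑ ω : Fin n → Fin n, (ballsInTopBins n k ω : ℝ) := by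
  have hkn : k ≤ n := by omega
  set b : ℝ := (n : ℝ) with hb
  set a : ℝ := (k : ℝ) with ha
  have hb1 : (1:ℝ) ≤ b := by rw [hb]; exact_mod_cast hn
  have hb0 : (0:ℝ) < b := by linarith
  have ha0 : (0:ℝ) ≤ a := Nat.cast_nonneg k
  have hab : a ≤ b := by rw [ha, hb]; exact_mod_cast hkn
  have h259 : 25 * a ≤ 9 * b := by rw [ha, hb]; exact_mod_cast hk
  set s1 : ℝ := ((b - 1)/b)^k with hs1
  -- sum of XX dominates
  have hpt : ∀ ω : Fin n → Fin n, (XX n k ω : ℝ) ≤ (ballsInTopBins n k ω : ℝ) := by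
    intro ω
    have hcard : (BB n k ω).card ≤ k := le_trans (Finset.card_image_le) (card_Sm hkn).le
    exact_mod_cast pointwise hkn ω hcard
  have hmono : (∑ ω : Fin n → Fin n, (XX n k ω : ℝ))
      ≤ ∑ ω : Fin n → Fin n, (ballsInTopBins n k ω : ℝ) :=
    Finset.sum_le_sum (fun ω _ => hpt ω)
  -- cast the counting identity
  have hsum := sumX (n := n) (m := k) hkn
  have hcast : (∑ ω : Fin n → Fin n, (XX n k ω : ℝ)) + (b - a) * (b^n * s1) = b * b^n := by
    have h0 : ((∑ ω : Fin n → Fin n, XX n k ω : ℕ) : ℝ)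
        + ((n - k : ℕ) : ℝ) * (((n-1)^k * n^(n-k) : ℕ) : ℝ) = (n : ℝ) * ((n^n : ℕ) : ℝ) := by
      exact_mod_cast congrArg (fun t : ℕ => (t : ℝ)) hsum
    rw [cast_miss1 hn hkn, Nat.cast_sub hkn, Nat.cast_sum, Nat.cast_pow] at h0
    rw [hs1, ha, hb]
    exact_mod_cast h0
  -- analytic bound on s1
  have hy0 : (0:ℝ) ≤ a / b := by positivity
  have hy1 : a / b ≤ 1 := by rw [div_le_one hb0]; linarith
  have hs1le : s1 ≤ 1 - a/b + (a/b)^2/2 := by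
    calc s1 ≤ Real.exp (-(k:ℝ)/b) := base_le_exp hn k
      _ ≤ 1 - a/b + (a/b)^2/2 := by
          have := exp_quad hy0 hy1
          rw [show -(a/b) = -(k:ℝ)/b by rw [ha]; ring] at this
          exact this
  have hs1nn : (0:ℝ) ≤ s1 := by
    apply pow_nonneg
    apply div_nonneg <;> linarith
  have hq : b^2 * s1 ≤ b^2 - a*b + a^2/2 := by
    have he : b^2 * (1 - a/b + (a/b)^2/2) = b^2 - a*b + a^2/2 := by
      field_simp
    nlinarith [mul_le_mul_of_nonneg_left hs1le (by positivity : (0:ℝ) ≤ b^2)]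
  have hkey : (3/2) * a ≤ b - (b - a) * s1 := by
    nlinarith [mul_le_mul_of_nonneg_left hq (by linarith : (0:ℝ) ≤ b - a),
      mul_nonneg (mul_nonneg ha0 (by linarith : (0:ℝ) ≤ 9*b - 25*a)) (by linarith : (0:ℝ) ≤ b - a),
      mul_nonneg ha0 (mul_nonneg ha0 ha0), sq_nonneg (b - a), sq_nonneg a]
  have hPn : (0:ℝ) < b^n := by positivity
  calc (3/2 : ℝ) * k * (n:ℝ)^n = ((3/2) * a) * b^n := by rw [ha, hb]
    _ ≤ (b - (b - a) * s1) * b^n := by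
        apply mul_le_mul_of_nonneg_right hkey hPn.le
    _ = b * b^n - (b - a) * (b^n * s1) := by ring
    _ = ∑ ω : Fin n → Fin n, (XX n k ω : ℝ) := by linarith [hcast]
    _ ≤ _ := hmono



lemma arith_var {b s1 s2 : ℝ} (hb : 1 ≤ b) (h0 : 0 ≤ s1) (h1 : s1 ≤ 1)
    (h2 : 0 ≤ s2) (h21 : s2 ≤ s1^2) :
    b * s1 + b * (b-1) * s2 - b^2 * s1^2 ≤ b/4 := by
  nlinarith [mul_le_mul_of_nonneg_left h21 (show (0:ℝ) ≤ b*(b-1) by nlinarith),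
    mul_nonneg (mul_nonneg (show (0:ℝ) ≤ b by linarith) h0) (sub_nonneg.2 h1),
    sq_nonneg (s1 - 1/2), mul_pos (show (0:ℝ) < b by linarith) (show (0:ℝ) < b by linarith)]

lemma arith_poly {w : ℝ} (h0 : 0 ≤ w) (h1 : w ≤ 0.61) : w^3/6 + 5*w^4/96 ≤ w^3/5 := by
  nlinarith [mul_nonneg (mul_nonneg h0 h0) h0, pow_nonneg h0 3]

lemma arith_phi {w : ℝ} (h432 : 0.432 ≤ w) (h61 : w ≤ 0.61) :
    0.001 ≤ -w/6 + w^2/2 - w^3/5 - 1/250 := by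
  nlinarith [mul_nonneg (sub_nonneg.2 h432) (sub_nonneg.2 h61),
    mul_nonneg (mul_nonneg (sub_nonneg.2 h432) (sub_nonneg.2 h432)) (sub_nonneg.2 h61),
    sq_nonneg (w - 0.432)]

lemma arith_gap {a b M w : ℝ} (hb6 : 1000000 ≤ b) (hwM : (b-1)*w = M)
    (h9r : 9*b + 1 ≤ 25*a) (hab : 2*a ≤ b) (hM5 : 5*M ≤ 6*a + 5)
    (hw432 : 0.432 ≤ w) (hw61 : w ≤ 0.61) :
    b*(w - w^2/2 + w^3/5) ≤ a - b/250 := by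
  have hbw_ub : b * w ≤ 1.2*a + 2 := by nlinarith
  have hphi := arith_phi hw432 hw61
  have hbphi : (5:ℝ)/3 ≤ b * (-w/6 + w^2/2 - w^3/5 - 1/250) := by
    nlinarith [mul_nonneg (show (0:ℝ) ≤ b - 1000000 by linarith)
      (show (0:ℝ) ≤ -w/6 + w^2/2 - w^3/5 - 1/250 by linarith)]
  have hid : b*(w - w^2/2 + w^3/5)
      = (b*w)/1.2 - b/250 - b*(-w/6 + w^2/2 - w^3/5 - 1/250) := by ring
  rw [hid]
  linarith

set_option maxHeartbeats 1600000 in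
lemma arith_key {a b M s1 : ℝ} (hb6 : 1000000 ≤ b) (h9r : 9*b + 1 ≤ 25*a)
    (hab : 2*a ≤ b) (hM6 : 6*a ≤ 5*M) (hM5 : 5*M ≤ 6*a + 5) (hMb : M ≤ b)
    (hs1nn : 0 ≤ s1) (hq : b^2*s1 ≤ b^2 - M*b + M^2/2) :
    3/2*a + 15625 ≤ b - (b - M)*s1 := by
  have ha0 : 0 ≤ a := by linarith
  have hM61 : M ≤ 0.61*b := by linarith
  have hf : 2*M*b^2 - (3/2)*M^2*b + M^3/2 ≤ b^2*(b - (b-M)*s1) := by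
    have h1 := mul_le_mul_of_nonneg_left hq (show (0:ℝ) ≤ b - M by linarith)
    linarith [h1]
  have hd : (0:ℝ) ≤ M - 6*a/5 := by linarith
  have hbM : (0:ℝ) ≤ b*(0.61*b - M) := by
    apply mul_nonneg (by linarith) (by linarith)
  have hbr : (0:ℝ) ≤ 2*b^2 - (3/2)*b*(M + 6*a/5) := by nlinarith [hbM]
  have hquad : (0:ℝ) ≤ M^2 + 6*a/5*M + 36*a^2/25 := by
    nlinarith [sq_nonneg (M + 3*a/5), sq_nonneg a]
  have hbr2 : (0:ℝ) ≤ 2*b^2 - (3/2)*b*(M + 6*a/5) + (M^2 + 6*a/5*M + 36*a^2/25)/2 := by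
    linarith
  have hfact : 2*M*b^2 - (3/2)*M^2*b + M^3/2
      - (2*(6*a/5)*b^2 - (3/2)*(6*a/5)^2*b + (6*a/5)^3/2)
      = (M - 6*a/5) * (2*b^2 - (3/2)*b*(M + 6*a/5) + (M^2 + 6*a/5*M + 36*a^2/25)/2) := by
    ring
  have hmono : 2*(6*a/5)*b^2 - (3/2)*(6*a/5)^2*b + (6*a/5)^3/2
      ≤ 2*M*b^2 - (3/2)*M^2*b + M^3/2 := by
    have := mul_nonneg hd hbr2
    linarith [hfact]
  have hneg : (0:ℝ) ≤ 2*a*b - a^2 - b^2/24 := by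
    nlinarith [mul_nonneg (show (0:ℝ) ≤ 25*a - 9*b - 1 by linarith)
      (show (0:ℝ) ≤ 2*b - a by linarith)]
  have hcube : (0:ℝ) ≤ 0.864*(b/2 - a)*(2*a*b - a^2 - b^2/24) := by
    apply mul_nonneg (by norm_num; linarith) hneg
  have hb3 : 1000000*b^2 ≤ b^3 := by nlinarith [sq_nonneg b]
  have hfin : (3/2*a + 15625)*b^2 ≤ 2*(6*a/5)*b^2 - (3/2)*(6*a/5)^2*b + (6*a/5)^3/2 := by
    linarith [hcube, hb3, sq_nonneg b]
  have hb2 : (0:ℝ) < b^2 := by positivity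
  have hch := le_trans hfin (le_trans hmono hf)
  rw [mul_comm] at hch
  exact (mul_le_mul_iff_right₀ hb2).1 hch

set_option maxHeartbeats 2000000 in
lemma regime2 {n k : ℕ} (hn : 1000000 ≤ n) (h9 : 9 * n < 25 * k) (h2k : 2 * k ≤ n) :
    (3/2 : ℝ) * k * (n:ℝ)^n ≤ ∑ ω : Fin n → Fin n, (ballsInTopBins n k ω : ℝ) := by
  classical
  set m : ℕ := 6 * k / 5 + 1 with hmdef
  have hkn : k ≤ n := by omega
  have hmn : m ≤ n := by omega
  have hmn1 : m + 1 ≤ n := by omega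
  have h6k : 6 * k ≤ 5 * m := by omega
  have h5m : 5 * m ≤ 6 * k + 5 := by omega
  have hn1 : 1 ≤ n := by omega
  have hn2 : 2 ≤ n := by omega
  set b : ℝ := (n : ℝ) with hb
  set a : ℝ := (k : ℝ) with ha
  set M : ℝ := (m : ℝ) with hM
  have hb6 : (1000000:ℝ) ≤ b := by rw [hb]; exact_mod_cast hn
  have hb0 : (0:ℝ) < b := by linarith
  have ha0 : (0:ℝ) ≤ a := by rw [ha]; exact Nat.cast_nonneg k
  have hM0 : (0:ℝ) ≤ M := by rw [hM]; exact Nat.cast_nonneg m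
  have hab : 2*a ≤ b := by rw [ha, hb]; exact_mod_cast h2k
  have h9r : 9*b + 1 ≤ 25*a := by
    rw [ha, hb]
    have : (9*n + 1 : ℕ) ≤ 25 * k := by omega
    exact_mod_cast this
  have hM6 : 6*a ≤ 5*M := by rw [ha, hM]; exact_mod_cast h6k
  have hM5 : 5*M ≤ 6*a + 5 := by rw [ha, hM]; exact_mod_cast h5m
  have hMb1 : M + 1 ≤ b := by rw [hM, hb]; exact_mod_cast hmn1
  have hMb : M ≤ b := by linarith
  set s1 : ℝ := ((b - 1)/b)^m with hs1
  set s2 : ℝ := ((b - 2)/b)^m with hs2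
  have hs1nn : (0:ℝ) ≤ s1 := by
    apply pow_nonneg
    apply div_nonneg <;> linarith
  have hs1le1 : s1 ≤ 1 := by
    apply pow_le_one₀ (by apply div_nonneg <;> linarith)
    rw [div_le_one hb0]; linarith
  have hs2nn : (0:ℝ) ≤ s2 := by
    apply pow_nonneg
    apply div_nonneg <;> linarith
  -- cast counting identities
  have hcastM1 : (((n-1)^m * n^(n-m) : ℕ) : ℝ) = b^n * s1 := by
    rw [hs1, hb]; exact cast_miss1 hn1 hmn
  have hcastM2 : (((n-2)^m * n^(n-m) : ℕ) : ℝ) = b^n * s2 := by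
    rw [hs2, hb]; exact cast_miss2 hn2 hmn
  have hXc : (∑ ω : Fin n → Fin n, (XX n m ω : ℝ)) = b * b^n - (b - M) * (b^n * s1) := by
    have h0 : ((∑ ω : Fin n → Fin n, XX n m ω : ℕ) : ℝ)
        + ((n - m : ℕ) : ℝ) * (((n-1)^m * n^(n-m) : ℕ) : ℝ) = (n : ℝ) * ((n^n : ℕ) : ℝ) := by
      exact_mod_cast congrArg (fun t : ℕ => (t : ℝ)) (sumX (n := n) (m := m) hmn)
    rw [hcastM1, Nat.cast_sub hmn, Nat.cast_sum, Nat.cast_pow] at h0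
    rw [← hb, ← hM] at h0
    linarith [h0]
  have hBc : (∑ ω : Fin n → Fin n, ((BB n m ω).card : ℝ)) = b * b^n - b * (b^n * s1) := by
    have h0 : ((∑ ω : Fin n → Fin n, (BB n m ω).card : ℕ) : ℝ)
        + (n : ℝ) * (((n-1)^m * n^(n-m) : ℕ) : ℝ) = (n : ℝ) * ((n^n : ℕ) : ℝ) := by
      exact_mod_cast congrArg (fun t : ℕ => (t : ℝ)) (sumB (n := n) (m := m) hmn)
    rw [hcastM1, Nat.cast_sum, Nat.cast_pow] at h0
    rw [← hb] at h0
    linarith [h0]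
  have hB2c : (∑ ω : Fin n → Fin n, ((BB n m ω).card : ℝ)^2)
      = b^2 * b^n + b * (b^n * s1) + b * (b-1) * (b^n * s2) - 2 * b^2 * (b^n * s1) := by
    have h0 : ((∑ ω : Fin n → Fin n, ((BB n m ω).card)^2 : ℕ) : ℝ)
        + 2 * (n:ℝ)^2 * (((n-1)^m * n^(n-m) : ℕ) : ℝ)
        = (n:ℝ)^2 * ((n^n : ℕ) : ℝ) + (n:ℝ) * (((n-1)^m * n^(n-m) : ℕ) : ℝ)
          + (n:ℝ) * ((n - 1 : ℕ):ℝ) * (((n-2)^m * n^(n-m) : ℕ) : ℝ) := by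
      exact_mod_cast congrArg (fun t : ℕ => (t : ℝ)) (sumB2 (n := n) (m := m) hmn)
    rw [hcastM1, hcastM2, Nat.cast_sub hn1, Nat.cast_sum, Nat.cast_pow] at h0
    rw [← hb] at h0
    push_cast at h0
    push_cast
    linarith [h0]
  -- variance bound
  set mu : ℝ := b * (1 - s1) with hmu
  have hcardO : (((univ : Finset (Fin n → Fin n)).card : ℕ) : ℝ) = b^n := by
    rw [card_Omega, hb]; push_cast; ring
  have hs2s1 : s2 ≤ s1^2 := by
    have hbase : (b-2)/b ≤ ((b-1)/b)^2 := by
      rw [div_pow, div_le_div_iff₀ hb0 (by positivity)]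
      nlinarith
    calc s2 ≤ (((b-1)/b)^2)^m :=
          pow_le_pow_left₀ (by apply div_nonneg <;> linarith) hbase m
      _ = ((b-1)/b)^(2*m) := by rw [← pow_mul]
      _ = s1^2 := by rw [hs1, ← pow_mul, mul_comm]
  have hvar : (∑ ω : Fin n → Fin n, (((BB n m ω).card : ℝ) - mu)^2) ≤ b^n * (b/4) := by
    have hexp : (∑ ω : Fin n → Fin n, (((BB n m ω).card : ℝ) - mu)^2)
        = (∑ ω : Fin n → Fin n, ((BB n m ω).card : ℝ)^2)
          - (2*mu) * (∑ ω : Fin n → Fin n, ((BB n m ω).card : ℝ))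
          + b^n * mu^2 := by
      rw [Finset.sum_congr rfl (fun ω _ => show (((BB n m ω).card : ℝ) - mu)^2
        = ((BB n m ω).card : ℝ)^2 - (2*mu) * ((BB n m ω).card : ℝ) + mu^2 by ring)]
      rw [Finset.sum_add_distrib, Finset.sum_sub_distrib, ← Finset.mul_sum, Finset.sum_const,
        nsmul_eq_mul, hcardO]
    rw [hexp, hB2c, hBc] 
    have hbn0 : (0:ℝ) ≤ b^n := by positivity
    have hbr : b * s1 + b * (b-1) * s2 - b^2 * s1^2 ≤ b/4 :=
      arith_var (by linarith) hs1nn hs1le1 hs2nn hs2s1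
    calc b ^ 2 * b ^ n + b * (b ^ n * s1) + b * (b - 1) * (b ^ n * s2) - 2 * b ^ 2 * (b ^ n * s1)
          - 2 * mu * (b * b ^ n - b * (b ^ n * s1)) + b ^ n * mu ^ 2
        = b^n * (b * s1 + b * (b-1) * s2 - b^2 * s1^2) := by rw [hmu]; ring
      _ ≤ b^n * (b/4) := mul_le_mul_of_nonneg_left hbr hbn0
  -- gap bound: mu ≤ a - b/250
  set w : ℝ := M / (b - 1) with hw
  have hb1 : (0:ℝ) < b - 1 := by linarith
  have hw0 : (0:ℝ) ≤ w := by rw [hw]; positivity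
  have hwM : (b - 1) * w = M := by rw [hw]; field_simp
  have hw1 : w ≤ 1 := by rw [hw, div_le_one hb1]; linarith
  have hw432 : 0.432 ≤ w := by
    rw [hw, le_div_iff₀ hb1]
    linarith
  have hw061 : w ≤ 0.61 := by
    rw [hw, div_le_iff₀ hb1]
    linarith
  have hs1ge : 1 - w + w^2/2 - w^3/6 - 5*w^4/96 ≤ s1 := by
    have h1 := exp_le_base (n := n) hn2 m
    rw [← hb, ← hM] at h1
    have h2 := exp_quartic hw0 hw1
    rw [show -w = -M/(b-1) by rw [hw]; ring] at h2
    rw [← hs1] at h1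
    linarith
  have hgap : mu ≤ a - b/250 := by
    have hstep1 : mu ≤ b * (w - w^2/2 + w^3/6 + 5*w^4/96) := by
      rw [hmu]
      have := mul_le_mul_of_nonneg_left hs1ge hb0.le
      linarith [this]
    have hpoly := arith_poly hw0 hw061
    have hstep2 : b * (w - w^2/2 + w^3/6 + 5*w^4/96) ≤ b * (w - w^2/2 + w^3/5) := by
      have := mul_le_mul_of_nonneg_left hpoly hb0.le
      linarith [this]
    have hstep3 := arith_gap hb6 hwM h9r hab hM5 hw432 hw061
    linarith
  -- Chebyshev bound on the bad event
  set bad : Finset (Fin n → Fin n) := univ.filter (fun ω => k < (BB n m ω).card) with hbad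
  have hbadcard : (bad.card : ℝ) * (b/250)^2 ≤ b^n * (b/4) := by
    have hterm : ∀ ω ∈ bad, (b/250)^2 ≤ (((BB n m ω).card : ℝ) - mu)^2 := by
      intro ω hω
      rw [hbad, mem_filter] at hω
      have hc : (k:ℝ) + 1 ≤ ((BB n m ω).card : ℝ) := by exact_mod_cast hω.2
      rw [← ha] at hc
      have h1 : b/250 ≤ ((BB n m ω).card : ℝ) - mu := by linarith [hgap]
      have h2 : (0:ℝ) ≤ b/250 := by positivity
      exact pow_le_pow_left₀ h2 h1 2
    calc (bad.card : ℝ) * (b/250)^2 = ∑ _ω ∈ bad, (b/250)^2 := by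
          rw [Finset.sum_const, nsmul_eq_mul]
      _ ≤ ∑ ω ∈ bad, (((BB n m ω).card : ℝ) - mu)^2 := Finset.sum_le_sum hterm
      _ ≤ ∑ ω : Fin n → Fin n, (((BB n m ω).card : ℝ) - mu)^2 :=
          Finset.sum_le_sum_of_subset_of_nonneg (Finset.subset_univ bad)
            (fun ω _ _ => sq_nonneg _)
      _ ≤ b^n * (b/4) := hvar
  have hbadb : (bad.card : ℝ) * b ≤ 15625 * b^n := by
    have h := mul_le_mul_of_nonneg_right hbadcard
      (le_of_lt (show (0:ℝ) < 62500/b by positivity))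
    have e1 : (bad.card : ℝ) * (b/250)^2 * (62500/b) = (bad.card : ℝ) * b := by
      field_simp
      ring
    have e2 : b^n * (b/4) * (62500/b) = 15625 * b^n := by
      field_simp
      ring
    rw [e1, e2] at h
    exact h
  -- pointwise comparison and sum splitting
  have hptX : ∀ ω : Fin n → Fin n, (XX n m ω : ℝ)
      ≤ (ballsInTopBins n k ω : ℝ) + (if k < (BB n m ω).card then b else 0) := by
    intro ω
    by_cases hc : k < (BB n m ω).card
    · rw [if_pos hc]
      have h1 : (XX n m ω : ℝ) ≤ b := by rw [hb]; exact_mod_cast XX_le ω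
      have h2 : (0:ℝ) ≤ (ballsInTopBins n k ω : ℝ) := Nat.cast_nonneg _
      linarith
    · rw [if_neg hc, add_zero]
      exact_mod_cast pointwise hkn ω (not_lt.1 hc)
  have hsumsplit : (∑ ω : Fin n → Fin n, (XX n m ω : ℝ))
      ≤ (∑ ω : Fin n → Fin n, (ballsInTopBins n k ω : ℝ)) + (bad.card : ℝ) * b := by
    have h := Finset.sum_le_sum (fun ω (_ : ω ∈ (univ : Finset (Fin n → Fin n))) => hptX ω)
    rw [Finset.sum_add_distrib] at h
    have he : (∑ ω : Fin n → Fin n, (if k < (BB n m ω).card then b else 0))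
        = (bad.card : ℝ) * b := by
      rw [← Finset.sum_filter, ← hbad, Finset.sum_const, nsmul_eq_mul]
    linarith [h, he.le, he.ge]
  -- final assembly
  have hy0 : (0:ℝ) ≤ M/b := by positivity
  have hy1 : M/b ≤ 1 := by rw [div_le_one hb0]; linarith
  have hs1e : s1 ≤ 1 - M/b + (M/b)^2/2 := by
    calc s1 ≤ Real.exp (-(m:ℝ)/(n:ℝ)) := by rw [hs1, hb]; exact base_le_exp hn1 m
      _ ≤ 1 - M/b + (M/b)^2/2 := by
          have h := exp_quad hy0 hy1
          rw [show -(M/b) = -(m:ℝ)/(n:ℝ) by rw [hM, hb]; ring] at h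
          exact h
  have hq : b^2*s1 ≤ b^2 - M*b + M^2/2 := by
    have he : b^2 * (1 - M/b + (M/b)^2/2) = b^2 - M*b + M^2/2 := by
      field_simp
    have h := mul_le_mul_of_nonneg_left hs1e (by positivity : (0:ℝ) ≤ b^2)
    linarith [h, he.le, he.ge]
  have hkey := arith_key hb6 h9r hab hM6 hM5 hMb hs1nn hq
  have hbn0 : (0:ℝ) ≤ b^n := by positivity
  calc (3/2 : ℝ) * k * (n:ℝ)^n = (3/2*a) * b^n := by rw [ha, hb]
    _ ≤ (b - (b - M)*s1 - 15625) * b^n := by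
        apply mul_le_mul_of_nonneg_right _ hbn0
        linarith [hkey]
    _ = (b * b^n - (b - M) * (b^n * s1)) - 15625 * b^n := by ring
    _ ≤ (∑ ω : Fin n → Fin n, (XX n m ω : ℝ)) - (bad.card : ℝ) * b := by
        linarith [hXc.le, hXc.ge, hbadb]
    _ ≤ ∑ ω : Fin n → Fin n, (ballsInTopBins n k ω : ℝ) := by linarith [hsumsplit]

end BTB

/-- If `n` balls are thrown independently and uniformly at random into `n` bins,
then for sufficiently large `n` and any `k ≤ n/2`, the expected number of balls
in the `k` most loaded bins is at least `1.5 k`. -/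
theorem stmt_0 :
    ∃ N : ℕ, ∀ n : ℕ, N ≤ n → ∀ k : ℕ, k ≤ n / 2 →
      (3 / 2 : ℝ) * k ≤
        (∑ ω : Fin n → Fin n, (ballsInTopBins n k ω : ℝ)) / (n : ℝ) ^ n := by
  refine ⟨1000000, fun n hn k hk => ?_⟩
  have hn1 : 1 ≤ n := by omega
  have h2k : 2 * k ≤ n := by omega
  have hpow : (0:ℝ) < (n:ℝ)^n := by positivity
  rw [le_div_iff₀ hpow]
  by_cases hcase : 25 * k ≤ 9 * n
  · exact BTB.regime1 hn1 hcase
  · exact BTB.regime2 hn (by omega) h2k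
end

section
/- Let Y_1, ..., Y_n be i.i.d. Poisson random variables with mean 1, and let Z_i be the indicator that Y_i ≥ t/2 where t = log(n/k)/log log(n/k). Then for n/k sufficiently large, E[∑ Z_i] ≥ 4k. -/
open Real

lemma key_ineq {x : ℝ} (hx : Real.exp 20 ≤ x) :
    4 * Real.exp 1 * (Nat.factorial (Nat.ceil ((Real.log x / Real.log (Real.log x)) / 2)) : ℝ) ≤ x := by
  have hx0 : (0:ℝ) < x := lt_of_lt_of_le (Real.exp_pos 20) hx
  set L := Real.log x with hLdef
  have hL : 20 ≤ L := (Real.le_log_iff_exp_le hx0).mpr hx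
  have hL0 : 0 < L := by linarith
  have hlogL : 1 ≤ Real.log L := by
    rw [Real.le_log_iff_exp_le hL0]
    calc Real.exp 1 ≤ 2.7182818286 := le_of_lt Real.exp_one_lt_d9
    _ ≤ L := by linarith
  have hlogL0 : 0 < Real.log L := by linarith
  set t := L / Real.log L with htdef
  have ht0 : 0 < t := div_pos hL0 hlogL0
  have htL : t ≤ L := by
    rw [htdef, div_le_iff₀ hlogL0]
    nlinarith
  set m := Nat.ceil (t / 2) with hmdef
  have hm1 : 1 ≤ m := Nat.one_le_ceil_iff.mpr (by linarith)
  have hmle : (m : ℝ) ≤ t / 2 + 1 := le_of_lt (Nat.ceil_lt_add_one (by linarith))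
  have hmr1 : (1:ℝ) ≤ (m:ℝ) := by exact_mod_cast hm1
  have hmL : (m : ℝ) ≤ L := by linarith
  have hfact : ((Nat.factorial m : ℕ) : ℝ) ≤ (m : ℝ) ^ m := by
    calc ((Nat.factorial m : ℕ) : ℝ) ≤ ((m ^ m : ℕ) : ℝ) := by exact_mod_cast Nat.factorial_le_pow m
    _ = (m : ℝ) ^ m := by push_cast; ring
  have hpow : (m : ℝ) ^ m = Real.exp ((m : ℝ) * Real.log m) := by
    rw [Real.exp_nat_mul, Real.exp_log (by linarith)]
  have hlogm : Real.log m ≤ Real.log L := Real.log_le_log (by linarith) hmL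
  have hlogLle : Real.log L ≤ L / 8 - 1 + Real.log 8 := by
    have := Real.log_le_sub_one_of_pos (show (0:ℝ) < L / 8 by linarith)
    have h8 : Real.log (L / 8) = Real.log L - Real.log 8 :=
      Real.log_div (by linarith) (by norm_num)
    linarith
  have hlog2 : Real.log 2 ≤ 0.6931471808 := le_of_lt Real.log_two_lt_d9
  have hlog8 : Real.log 8 = 3 * Real.log 2 := by
    rw [show (8:ℝ) = 2 ^ 3 by norm_num, Real.log_pow]; push_cast; ring
  have hlog4 : Real.log 4 = 2 * Real.log 2 := by
    rw [show (4:ℝ) = 2 ^ 2 by norm_num, Real.log_pow]; push_cast; ring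
  have hexp : Real.log 4 + 1 + (m : ℝ) * Real.log m ≤ L := by
    have h1 : (m : ℝ) * Real.log m ≤ (m : ℝ) * Real.log L :=
      mul_le_mul_of_nonneg_left hlogm (by linarith)
    have h2 : (m : ℝ) * Real.log L ≤ (t / 2 + 1) * Real.log L :=
      mul_le_mul_of_nonneg_right hmle (by linarith)
    have h3 : (t / 2 + 1) * Real.log L = L / 2 + Real.log L := by
      rw [htdef]; field_simp
    nlinarith
  calc 4 * Real.exp 1 * ((Nat.factorial m : ℕ) : ℝ)
      ≤ 4 * Real.exp 1 * Real.exp ((m : ℝ) * Real.log m) := by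
        rw [hpow] at hfact
        exact mul_le_mul_of_nonneg_left hfact (by positivity)
  _ = Real.exp (Real.log 4 + 1 + (m : ℝ) * Real.log m) := by
        rw [Real.exp_add, Real.exp_add, Real.exp_log (by norm_num : (0:ℝ) < 4)]
  _ ≤ Real.exp L := Real.exp_le_exp.mpr hexp
  _ = x := Real.exp_log hx0

/-- Let `Y₁, …, Yₙ` be i.i.d. Poisson random variables with mean 1 and let `Zᵢ` be the
indicator that `Yᵢ ≥ t/2` where `t = log(n/k)/log log(n/k)`. For `n/k` sufficiently large,
`E[∑ᵢ Zᵢ] = n · Pr[Poisson(1) ≥ t/2] ≥ 4k`. -/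
theorem stmt_2 :
    ∃ C : ℝ, ∀ n k : ℕ, 0 < k → C ≤ (n : ℝ) / k →
      (4 : ℝ) * k ≤
        (n : ℝ) * ∑' j : ℕ,
          (if (Real.log ((n : ℝ) / k) / Real.log (Real.log ((n : ℝ) / k))) / 2 ≤ (j : ℝ)
            then ProbabilityTheory.poissonPMFReal 1 j else 0) := by
  refine ⟨Real.exp 20, fun n k hk hC => ?_⟩
  have hk0 : (0:ℝ) < k := by exact_mod_cast hk
  set x : ℝ := (n : ℝ) / k with hxdef
  have hx0 : (0:ℝ) < x := lt_of_lt_of_le (Real.exp_pos 20) hC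
  have hn0 : (0:ℝ) < n := by
    by_contra h
    push_neg at h
    have : x ≤ 0 := div_nonpos_of_nonpos_of_nonneg h (le_of_lt hk0)
    linarith
  set t := Real.log x / Real.log (Real.log x) with htdef
  set m := Nat.ceil (t / 2) with hmdef
  set f : ℕ → ℝ := fun j =>
    if t / 2 ≤ (j : ℝ) then ProbabilityTheory.poissonPMFReal 1 j else 0 with hfdef
  have hnonneg : ∀ j, 0 ≤ f j := by
    intro j
    simp only [hfdef]
    split
    · exact ProbabilityTheory.poissonPMFReal_nonneg
    · exact le_refl 0
  have hsum : Summable f := by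
    refine Summable.of_nonneg_of_le hnonneg ?_
      (ProbabilityTheory.poissonPMFRealSum 1).summable
    intro j
    simp only [hfdef]
    split
    · exact le_refl _
    · exact ProbabilityTheory.poissonPMFReal_nonneg
  have hterm : f m ≤ ∑' j, f j := Summable.le_tsum hsum m (fun j _ => hnonneg j)
  have hfm : f m = Real.exp (-1) / (Nat.factorial m : ℝ) := by
    simp only [hfdef]
    rw [if_pos (Nat.le_ceil _)]
    simp [ProbabilityTheory.poissonPMFReal]
  have hkey := key_ineq hC
  rw [← htdef, ← hmdef] at hkey
  -- 4 * k ≤ n * (exp(-1)/m!)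
  have hfactpos : (0:ℝ) < (Nat.factorial m : ℝ) := by exact_mod_cast Nat.factorial_pos m
  have hxk : (n : ℝ) = x * k := by
    rw [hxdef]; field_simp
  have hmain : (4:ℝ) * k ≤ (n : ℝ) * (Real.exp (-1) / (Nat.factorial m : ℝ)) := by
    have heq : (n:ℝ) * (Real.exp (-1) / (Nat.factorial m : ℝ))
        = (n : ℝ) / (Real.exp 1 * (Nat.factorial m : ℝ)) := by
      rw [Real.exp_neg]; field_simp
    rw [heq, le_div_iff₀ (by positivity)]
    calc (4:ℝ) * k * (Real.exp 1 * (Nat.factorial m : ℝ))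
        = (4 * Real.exp 1 * (Nat.factorial m : ℝ)) * k := by ring
    _ ≤ x * k := mul_le_mul_of_nonneg_right hkey hk0.le
    _ = n := hxk.symm
  calc (4:ℝ) * k ≤ (n : ℝ) * (Real.exp (-1) / (Nat.factorial m : ℝ)) := hmain
  _ = (n : ℝ) * f m := by rw [hfm]
  _ ≤ (n : ℝ) * ∑' j, f j := mul_le_mul_of_nonneg_left hterm (le_of_lt hn0)
end

section
/- Let Y ~ Binomial(n, p) with n ≥ 2 and 1/n ≤ p ≤ 1 - 1/n. Then the mean absolute deviation of Y satisfies E|Y - E[Y]| ≥ std(Y)/√2, where std(Y) = √(np(1-p)). -/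
open Finset Filter Nat Real Topology Stirling


lemma numeric_aux : Real.exp 1 / Real.sqrt 2 * Real.exp (1/28) ≤ 2 := by
  have h1 : Real.exp 1 < 2.7182818286 := Real.exp_one_lt_d9
  have h2 : Real.exp (1/28) ≤ 28/27 := by
    have h3 : (-(1/28):ℝ) + 1 ≤ Real.exp (-(1/28)) := Real.add_one_le_exp _
    have h4 : (0:ℝ) < Real.exp (-(1/28)) := Real.exp_pos _
    have h5 : Real.exp (1/28) = 1 / Real.exp (-(1/28)) := by
      rw [Real.exp_neg]; field_simp
    rw [h5, div_le_div_iff₀ h4 (by norm_num)]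
    linarith
  have h6 : (1.414:ℝ) ≤ Real.sqrt 2 := by
    have := Real.sq_sqrt (by norm_num : (2:ℝ) ≥ 0)
    nlinarith [Real.sqrt_nonneg 2]
  have h7 : (0:ℝ) < Real.sqrt 2 := by linarith
  rw [div_mul_eq_mul_div, div_le_iff₀ h7]
  nlinarith [Real.exp_pos (1/28), Real.exp_pos 1]

lemma sqrtpi_le_stirlingSeq {n : ℕ} (hn : 1 ≤ n) : Real.sqrt π ≤ stirlingSeq n := by
  obtain ⟨k, rfl⟩ := Nat.exists_eq_add_of_le hn
  have h := (stirlingSeq'_antitone).le_of_tendsto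
    ((tendsto_stirlingSeq_sqrt_pi).comp (tendsto_add_atTop_nat 1)) k
  simpa [Nat.add_comm] using h

lemma stirlingSeq_le_sqrtpi_mul {n : ℕ} (hn : 1 ≤ n) :
    stirlingSeq n ≤ Real.sqrt π * Real.exp (1 / (4 * n)) := by
  obtain ⟨k, rfl⟩ : ∃ k, n = k + 1 := ⟨n - 1, by omega⟩
  set f : ℕ → ℝ := fun j => Real.log (stirlingSeq (j + 1)) - 1 / (4 * (j + 1)) with hf
  have hmono : Monotone f := by
    apply monotone_nat_of_le_succ
    intro j
    have hgeo := log_stirlingSeq_diff_le_geo_sum j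
    set t : ℝ := 2 * ((j : ℝ) + 1) + 1 with ht
    have htpos : (0:ℝ) < t := by positivity
    have ht1 : t ^ 2 - 1 = 4 * ((j:ℝ) + 1) * ((j:ℝ) + 2) := by rw [ht]; ring
    have ht2 : t ^ 2 - 1 ≠ 0 := by rw [ht1]; positivity
    have h2 : (1:ℝ) - (1 / t) ^ 2 ≠ 0 := by
      have : (1 / t) ^ 2 < 1 := by
        rw [div_pow, one_pow, div_lt_one (by positivity)]
        nlinarith [j.cast_nonneg (α := ℝ)]
      linarith
    have hx : (1 / t) ^ 2 / (1 - (1 / t) ^ 2)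
        = 1 / (4 * ((j:ℝ) + 1)) - 1 / (4 * ((j:ℝ) + 1 + 1)) := by
      have e1 : (1 / t) ^ 2 / (1 - (1 / t) ^ 2) = 1 / (t ^ 2 - 1) := by
        rw [div_eq_div_iff h2 ht2]
        field_simp
      rw [e1, ht1]
      rw [div_sub_div _ _ (by positivity) (by positivity), div_eq_div_iff (by positivity) (by positivity)]
      ring
    have hgeo' : Real.log (stirlingSeq (j + 1)) - Real.log (stirlingSeq (j + 2)) ≤
        1 / (4 * ((j:ℝ) + 1)) - 1 / (4 * ((j:ℝ) + 1 + 1)) := by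
      rw [← hx]; convert hgeo using 3 <;> push_cast <;> ring
    simp only [hf]
    push_cast
    linarith
  have htend : Tendsto f atTop (𝓝 (Real.log (Real.sqrt π))) := by
    have h1 : Tendsto (fun j : ℕ => Real.log (stirlingSeq (j + 1))) atTop
        (𝓝 (Real.log (Real.sqrt π))) := by
      apply Filter.Tendsto.log
      · exact tendsto_stirlingSeq_sqrt_pi.comp (tendsto_add_atTop_nat 1)
      · positivity
    have h2 : Tendsto (fun j : ℕ => 1 / (4 * ((j:ℝ) + 1))) atTop (𝓝 0) := by
      simp only [one_div]
      apply Tendsto.comp tendsto_inv_atTop_zero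
      apply tendsto_atTop_mono (fun j : ℕ => by
        push_cast; linarith [j.cast_nonneg (α := ℝ)] : ∀ j : ℕ, (j:ℝ) ≤ 4 * ((j:ℝ)+1))
      exact tendsto_natCast_atTop_atTop
    have := h1.sub h2
    simpa only [sub_zero] using this
  have hle : f k ≤ Real.log (Real.sqrt π) := hmono.ge_of_tendsto htend k
  have hpos : 0 < stirlingSeq (k + 1) := stirlingSeq'_pos k
  have hlog : Real.log (stirlingSeq (k+1)) ≤ Real.log (Real.sqrt π) + 1 / (4 * ((k:ℝ)+1)) := by
    simp only [hf] at hle; push_cast at hle ⊢; linarith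
  calc stirlingSeq (k+1) = Real.exp (Real.log (stirlingSeq (k+1))) := (Real.exp_log hpos).symm
    _ ≤ Real.exp (Real.log (Real.sqrt π) + 1 / (4 * ((k:ℝ)+1))) := Real.exp_le_exp.mpr hlog
    _ = Real.sqrt π * Real.exp (1 / (4 * ((k+1:ℕ):ℝ))) := by
        rw [Real.exp_add, Real.exp_log (by positivity)]; push_cast; ring

-- D x = √(2x) * (x/e)^x ; factorial bounds
noncomputable def Dst (x : ℕ) : ℝ := Real.sqrt (2 * x) * ((x : ℝ) / Real.exp 1) ^ x

lemma Dst_pos {x : ℕ} (hx : 1 ≤ x) : 0 < Dst x := by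
  unfold Dst
  have : (0:ℝ) < x := by exact_mod_cast hx
  positivity

lemma factorial_eq_stirling (x : ℕ) (hx : 1 ≤ x) :
    (x ! : ℝ) = stirlingSeq x * Dst x := by
  unfold stirlingSeq Dst
  rw [div_mul_cancel₀]
  exact ne_of_gt (Dst_pos hx)

lemma factorial_lower (x : ℕ) (hx : 1 ≤ x) : Real.sqrt π * Dst x ≤ (x ! : ℝ) := by
  rw [factorial_eq_stirling x hx]
  exact mul_le_mul_of_nonneg_right (sqrtpi_le_stirlingSeq hx) (Dst_pos hx).le

lemma factorial_upper_one (x : ℕ) (hx : 1 ≤ x) :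
    (x ! : ℝ) ≤ (Real.exp 1 / Real.sqrt 2) * Dst x := by
  rw [factorial_eq_stirling x hx]
  have h1 : stirlingSeq x ≤ stirlingSeq 1 := by
    obtain ⟨k, rfl⟩ : ∃ k, x = k + 1 := ⟨x - 1, by omega⟩
    exact stirlingSeq'_antitone (Nat.zero_le k)
  rw [stirlingSeq_one] at h1
  exact mul_le_mul_of_nonneg_right h1 (Dst_pos hx).le

lemma factorial_upper_seven (x : ℕ) (hx : 7 ≤ x) :
    (x ! : ℝ) ≤ (Real.sqrt π * Real.exp (1/28)) * Dst x := by
  rw [factorial_eq_stirling x (by omega)]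
  refine mul_le_mul_of_nonneg_right ?_ (Dst_pos (by omega)).le
  refine (stirlingSeq_le_sqrtpi_mul (by omega : 1 ≤ x)).trans ?_
  have : Real.exp (1 / (4 * (x:ℝ))) ≤ Real.exp (1/28) := by
    rw [Real.exp_le_exp]
    have hx' : (28:ℝ) ≤ 4 * x := by
      have : (7:ℝ) ≤ x := by exact_mod_cast hx
      linarith
    rw [div_le_div_iff₀ (by positivity) (by norm_num)]
    linarith
  exact mul_le_mul_of_nonneg_left this (Real.sqrt_nonneg π)

-- Core: D (k+j) ≤ 2 * choose * D k * D j  when 1 ≤ k, 7 ≤ j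
lemma Dst_le (k j : ℕ) (hk : 1 ≤ k) (hj : 7 ≤ j) :
    Dst (k + j) ≤ 2 * ((k+j).choose k : ℝ) * Dst k * Dst j := by
  have hn : 1 ≤ k + j := by omega
  have hfact : ((k+j).choose k : ℝ) * k ! * j ! = ((k+j)! : ℝ) := by
    exact_mod_cast congrArg (Nat.cast (R := ℝ))
      (Nat.add_sub_cancel_left (n := k) (m := j) ▸ Nat.choose_mul_factorial_mul_factorial
        (Nat.le_add_right k j))
  have hcpos : (0:ℝ) < ((k+j).choose k : ℝ) := by
    exact_mod_cast Nat.choose_pos (Nat.le_add_right k j)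
  have hpi : (0:ℝ) < Real.sqrt π := Real.sqrt_pos.mpr Real.pi_pos
  have h1 : Real.sqrt π * Dst (k + j) ≤ ((k+j)! : ℝ) := factorial_lower _ hn
  have h4 := factorial_upper_one k hk
  have h5 := factorial_upper_seven j hj
  have h6 : ((k+j)! : ℝ) ≤ ((k+j).choose k : ℝ) * ((Real.exp 1 / Real.sqrt 2) * Dst k) *
      ((Real.sqrt π * Real.exp (1/28)) * Dst j) := by
    rw [← hfact]
    have hDk := (Dst_pos hk).le
    have hDj := (Dst_pos (show 1 ≤ j by omega)).le
    have hjf : (0:ℝ) ≤ (j ! : ℝ) := by positivity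
    apply mul_le_mul (mul_le_mul le_rfl h4 (by positivity) hcpos.le) h5 hjf
    exact mul_nonneg hcpos.le (mul_nonneg (by positivity) hDk)
  have h7 : ((k+j).choose k : ℝ) * ((Real.exp 1 / Real.sqrt 2) * Dst k) *
      ((Real.sqrt π * Real.exp (1/28)) * Dst j)
      = Real.sqrt π * ((Real.exp 1 / Real.sqrt 2 * Real.exp (1/28)) *
        (((k+j).choose k : ℝ) * Dst k * Dst j)) := by ring
  have h8 : Real.exp 1 / Real.sqrt 2 * Real.exp (1/28) *
        (((k+j).choose k : ℝ) * Dst k * Dst j)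
      ≤ 2 * (((k+j).choose k : ℝ) * Dst k * Dst j) := by
    apply mul_le_mul_of_nonneg_right numeric_aux
    have := Dst_pos hk
    have := Dst_pos (show 1 ≤ j by omega)
    positivity
  have h9 : Real.sqrt π * Dst (k+j) ≤ Real.sqrt π *
      (2 * (((k+j).choose k : ℝ) * Dst k * Dst j)) := by
    calc Real.sqrt π * Dst (k+j) ≤ ((k+j)! :ℝ) := h1
      _ ≤ _ := h6
      _ = _ := h7
      _ ≤ Real.sqrt π * (2 * (((k+j).choose k : ℝ) * Dst k * Dst j)) := by
          exact mul_le_mul_of_nonneg_left h8 hpi.le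
  have := le_of_mul_le_mul_left h9 hpi
  linarith [this]

lemma KL_core (k j : ℕ) (hk : 1 ≤ k) (hj : 7 ≤ j) :
    ((k+j:ℕ):ℝ)^(2*(k+j)+1) ≤ 8 * (k:ℝ)^(2*k+1) * (j:ℝ)^(2*j+1) * (((k+j).choose k : ℕ):ℝ)^2 := by
  set u : ℝ := Real.exp 1 with hu
  have hupos : (0:ℝ) < u := Real.exp_pos 1
  have hD2 : ∀ x : ℕ, Dst x ^ 2 * u ^ (2*x) = 2 * (x:ℝ) * (x:ℝ)^(2*x) := by
    intro x
    unfold Dst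
    rw [mul_pow, Real.sq_sqrt (by positivity), ← pow_mul, div_pow,
      show x * 2 = 2 * x by ring]
    field_simp
    rw [hu]
  have hsq := pow_le_pow_left₀ (Dst_pos (show 1 ≤ k + j by omega)).le (Dst_le k j hk hj) 2
  have H0 := mul_le_mul_of_nonneg_right hsq (by positivity : (0:ℝ) ≤ u ^ (2*(k+j)))
  have hsplit : u^(2*(k+j)) = u^(2*k) * u^(2*j) := by rw [← pow_add]; congr 1; ring
  have hR : (2 * ((k+j).choose k : ℝ) * Dst k * Dst j)^2 * u^(2*(k+j))
      = 4 * (((k+j).choose k : ℝ))^2 * ((Dst k ^2 * u^(2*k)) * (Dst j ^2 * u^(2*j))) := by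
    rw [hsplit]; ring
  rw [hD2, hR, hD2, hD2] at H0
  push_cast at H0 ⊢
  rw [pow_succ, pow_succ, pow_succ]
  nlinarith [H0]

lemma KL (k j : ℕ) (hk : 1 ≤ k) (hj : 1 ≤ j) :
    ((k+j:ℕ):ℝ)^(2*(k+j)+1) ≤ 8 * (k:ℝ)^(2*k+1) * (j:ℝ)^(2*j+1) * (((k+j).choose k : ℕ):ℝ)^2 := by
  have hsymm : (k+j).choose k = (k+j).choose j := by
    rw [← Nat.choose_symm (Nat.le_add_right k j), Nat.add_sub_cancel_left]
  rcases le_or_gt 7 j with h7 | h7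
  · exact KL_core k j hk h7
  rcases le_or_gt 7 k with h7' | h7'
  · have := KL_core j k hj h7'
    rw [Nat.add_comm j k, ← hsymm] at this
    exact this.trans_eq (by ring)
  · have hk6 : k ≤ 6 := by omega
    have hj6 : j ≤ 6 := by omega
    interval_cases k <;> interval_cases j <;> norm_num [Nat.choose]

lemma telescope_term (n : ℕ) (p : ℝ) (k : ℕ) (hk : k ≤ n) :
    ((k:ℝ) - n*p) * ((n.choose k : ℝ) * p^k * (1-p)^(n-k))
    = (k:ℝ) * (1-p) * ((n.choose k : ℝ) * p^k * (1-p)^(n-k))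
      - ((k:ℝ)+1) * (1-p) * ((n.choose (k+1) : ℝ) * p^(k+1) * (1-p)^(n-(k+1))) := by
  rcases eq_or_lt_of_le hk with rfl | hlt
  · rw [Nat.choose_succ_self]
    push_cast
    ring
  · have hch : (n.choose (k+1) : ℝ) * ((k:ℝ)+1) = (n.choose k : ℝ) * ((n:ℝ) - (k:ℝ)) := by
      have h1 := Nat.choose_succ_right_eq n k
      have h2 : ((n.choose (k+1) : ℕ):ℝ) * (((k+1):ℕ):ℝ) = ((n.choose k:ℕ):ℝ) * (((n-k):ℕ):ℝ) := by
        exact_mod_cast congrArg (Nat.cast : ℕ → ℝ) h1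
      rw [Nat.cast_sub hk] at h2
      push_cast at h2 ⊢
      linarith
    have hexp : (1-p)^(n-k) = (1-p)^(n-(k+1)) * (1-p) := by
      rw [← pow_succ]
      congr 1
      omega
    rw [hexp, pow_succ]
    linear_combination ((1 - p) * (p^k * p) * (1-p)^(n-(k+1))) * hch

lemma mad_formula (n m : ℕ) (p : ℝ) (hm1 : (m:ℝ) - 1 ≤ n*p) (hm2 : (n:ℝ)*p ≤ m)
    (hmn : m ≤ n) :
    ∑ i ∈ range (n+1), (n.choose i : ℝ) * p^i * (1-p)^(n-i) * |(i:ℝ) - n*p|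
    = 2 * m * (1-p) * ((n.choose m : ℝ) * p^m * (1-p)^(n-m)) := by
  set b : ℕ → ℝ := fun k => (n.choose k : ℝ) * p^k * (1-p)^(n-k) with hb
  set g : ℕ → ℝ := fun k => ((k:ℝ) - n*p) * b k with hg
  set A : ℕ → ℝ := fun k => (k:ℝ) * (1-p) * b k with hA
  have hA0 : A 0 = 0 := by simp [hA]
  have hAn1 : A (n+1) = 0 := by
    simp only [hA, hb, Nat.choose_succ_self]
    push_cast
    ring
  have htel : ∀ k ∈ range (n+1), g k = A k - A (k+1) := by
    intro k hk
    have := telescope_term n p k (Nat.lt_succ_iff.mp (mem_range.mp hk))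
    simp only [hg, hA, hb]
    convert this using 2
    push_cast
    ring
  have hsall : ∑ k ∈ range (n+1), g k = 0 := by
    rw [Finset.sum_congr rfl htel, Finset.sum_range_sub' A (n+1), hA0, hAn1, sub_zero]
  have hs1 : ∑ k ∈ range m, g k = - A m := by
    have : ∀ k ∈ range m, g k = A k - A (k+1) := fun k hk =>
      htel k (mem_range.mpr (by have := mem_range.mp hk; omega))
    rw [Finset.sum_congr rfl this, Finset.sum_range_sub' A m, hA0, zero_sub]
  have hsplit : ∑ k ∈ range (n+1), (b k * |(k:ℝ) - n*p| - g k)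
      = ∑ k ∈ range m, (b k * |(k:ℝ) - n*p| - g k) := by
    symm
    apply Finset.sum_subset
    · intro x hx
      exact mem_range.mpr (by have := mem_range.mp hx; omega)
    · intro x hx hxm
      have hxm' : m ≤ x := by simpa using hxm
      have : |(x:ℝ) - n*p| = (x:ℝ) - n*p := by
        apply abs_of_nonneg
        have : (m:ℝ) ≤ x := by exact_mod_cast hxm'
        linarith
      rw [this, hg]
      ring
  have hinner : ∀ k ∈ range m, b k * |(k:ℝ) - n*p| - g k = -2 * g k := by
    intro k hk
    have hkm : k + 1 ≤ m := mem_range.mp hk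
    have hkr : (k:ℝ) + 1 ≤ m := by exact_mod_cast hkm
    have : |(k:ℝ) - n*p| = -((k:ℝ) - n*p) := by
      apply abs_of_nonpos
      linarith
    rw [this, hg]
    ring
  have key : ∑ i ∈ range (n+1), b i * |(i:ℝ) - n*p| = 2 * A m := by
    have e1 : ∑ i ∈ range (n+1), b i * |(i:ℝ) - n*p|
        = (∑ k ∈ range (n+1), (b k * |(k:ℝ) - n*p| - g k)) + ∑ k ∈ range (n+1), g k := by
      rw [← Finset.sum_add_distrib]
      congr 1
      ext k
      ring
    rw [e1, hsall, hsplit, Finset.sum_congr rfl hinner, add_zero, ← Finset.mul_sum, hs1]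
    ring
  rw [key, hA]
  ring

lemma unimodal_min (a' b' : ℕ) (a b x : ℝ) (ha : 0 ≤ a) (hb : b ≤ 1)
    (hax : a ≤ x) (hxb : x ≤ b) :
    min (a^(a'+1)*(1-a)^(b'+1)) (b^(a'+1)*(1-b)^(b'+1)) ≤ x^(a'+1)*(1-x)^(b'+1) := by
  set h : ℝ → ℝ := fun y => y^(a'+1)*(1-y)^(b'+1) with hh
  set c : ℝ := ((a':ℝ)+1)/((a':ℝ)+(b':ℝ)+2) with hc
  have hc0 : 0 < c := by positivity
  have hc1 : c < 1 := by
    rw [hc, div_lt_one (by positivity)]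
    linarith [Nat.cast_nonneg (α := ℝ) b']
  have hderiv : ∀ y : ℝ, HasDerivAt h
      (((a':ℝ)+1) * y^a' * (1-y)^(b'+1) - ((b':ℝ)+1) * y^(a'+1) * (1-y)^b') y := by
    intro y
    have h1 : HasDerivAt (fun y:ℝ => y^(a'+1)) (((a':ℝ)+1)*y^a') y := by
      simpa using hasDerivAt_pow (a'+1) y
    have h2 : HasDerivAt (fun y:ℝ => (1-y)^(b'+1)) (-(((b':ℝ)+1)*(1-y)^b')) y := by
      have := (hasDerivAt_pow (b'+1) (1-y)).comp y ((hasDerivAt_id y).const_sub 1)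
      simpa [Function.comp_def] using this
    have := h1.mul h2
    refine this.congr_deriv ?_
    push_cast
    ring
  have hcont : ContinuousOn h (Set.Icc 0 c) ∧ ContinuousOn h (Set.Icc c 1) := by
    constructor <;> exact (Continuous.continuousOn (by fun_prop))
  have hdsign : ∀ y : ℝ, ((a':ℝ)+1) * y^a' * (1-y)^(b'+1) - ((b':ℝ)+1) * y^(a'+1) * (1-y)^b'
      = y^a' * (1-y)^b' * (((a':ℝ)+1)*(1-y) - ((b':ℝ)+1)*y) := by
    intro y; ring
  have hmono : MonotoneOn h (Set.Icc 0 c) := by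
    apply monotoneOn_of_deriv_nonneg (convex_Icc 0 c) hcont.1
    · intro y hy
      exact (hderiv y).differentiableAt.differentiableWithinAt
    · intro y hy
      rw [interior_Icc] at hy
      rw [(hderiv y).deriv, hdsign]
      have hy0 : 0 < y := hy.1
      have hyc : y < c := hy.2
      have hy1 : y < 1 := hyc.trans hc1
      have hyc2 : y < ((a':ℝ)+1)/((a':ℝ)+(b':ℝ)+2) := hyc
      rw [lt_div_iff₀ (by positivity : (0:ℝ) < (a':ℝ)+(b':ℝ)+2)] at hyc2
      have hfac : 0 ≤ ((a':ℝ)+1)*(1-y) - ((b':ℝ)+1)*y := by nlinarith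
      have hp1 : (0:ℝ) ≤ y^a' := by positivity
      have hp2 : (0:ℝ) ≤ (1-y)^b' := pow_nonneg (by linarith) b'
      exact mul_nonneg (mul_nonneg hp1 hp2) hfac
  have hanti : AntitoneOn h (Set.Icc c 1) := by
    apply antitoneOn_of_deriv_nonpos (convex_Icc c 1) hcont.2
    · intro y hy
      exact (hderiv y).differentiableAt.differentiableWithinAt
    · intro y hy
      rw [interior_Icc] at hy
      rw [(hderiv y).deriv, hdsign]
      have hy0 : 0 < y := hc0.trans hy.1
      have hy1 : y < 1 := hy.2
      have hyc2 : ((a':ℝ)+1)/((a':ℝ)+(b':ℝ)+2) ≤ y := by rw [← hc]; exact hy.1.le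
      rw [div_le_iff₀ (by positivity : (0:ℝ) < (a':ℝ)+(b':ℝ)+2)] at hyc2
      have hneg : ((a':ℝ)+1)*(1-y) - ((b':ℝ)+1)*y ≤ 0 := by nlinarith
      have hp1 : (0:ℝ) ≤ y^a' := by positivity
      have hp2 : (0:ℝ) ≤ (1-y)^b' := pow_nonneg (by linarith) b'
      exact mul_nonpos_of_nonneg_of_nonpos (mul_nonneg hp1 hp2) hneg
  rcases le_or_gt x c with hxc | hxc
  · have h1 : h a ≤ h x := hmono ⟨ha, hax.trans hxc⟩ ⟨ha.trans hax, hxc⟩ hax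
    exact (min_le_left _ _).trans h1
  · have h1 : h b ≤ h x := hanti ⟨hxc.le, hxb.trans hb⟩ ⟨hxc.le.trans hxb, hb⟩ hxb
    exact (min_le_right _ _).trans h1

lemma endpointA (t u : ℕ) :
    (((t+u+2:ℕ)):ℝ)/2 ≤ 4 * ((t:ℝ)+2)^2 * (((t+u+2).choose (t+2) : ℕ):ℝ)^2 *
      ((((t:ℝ)+1)/((t+u+2:ℕ):ℝ))^(2*t+3) * ((1 - ((t:ℝ)+1)/((t+u+2:ℕ):ℝ)))^(2*u+1)) := by
  set N : ℝ := ((t+u+2:ℕ):ℝ) with hN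
  have hNpos : (0:ℝ) < N := by rw [hN]; positivity
  have h1mA : 1 - ((t:ℝ)+1)/N = ((u:ℝ)+1)/N := by
    rw [hN]
    field_simp
    push_cast
    ring
  rw [h1mA, div_pow, div_pow,
    show (4:ℝ) * ((t:ℝ)+2)^2 * (((t+u+2).choose (t+2) : ℕ):ℝ)^2 *
        (((t:ℝ)+1)^(2*t+3)/N^(2*t+3)*(((u:ℝ)+1)^(2*u+1)/N^(2*u+1)))
      = 4 * ((t:ℝ)+2)^2 * (((t+u+2).choose (t+2) : ℕ):ℝ)^2 *
        (((t:ℝ)+1)^(2*t+3)*((u:ℝ)+1)^(2*u+1))/(N^(2*t+3)*N^(2*u+1)) from by ring,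
    ← pow_add, show (2*t+3)+(2*u+1) = 2*(t+u+2) from by ring,
    le_div_iff₀ (pow_pos hNpos _)]
  have hKL := KL (t+1) (u+1) (by omega) (by omega)
  rw [show t+1+(u+1) = t+u+2 from by ring] at hKL
  rw [show 2*(t+1)+1 = 2*t+3 from by ring, show 2*(u+1)+1 = 2*u+3 from by ring] at hKL
  push_cast at hKL
  have hch : (((t+u+2).choose (t+2) : ℕ):ℝ) * ((t:ℝ)+2)
      = (((t+u+2).choose (t+1) : ℕ):ℝ) * ((u:ℝ)+1) := by
    have h1 := Nat.choose_succ_right_eq (t+u+2) (t+1)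
    rw [show t+u+2-(t+1) = u+1 from by omega] at h1
    exact_mod_cast congrArg (Nat.cast : ℕ → ℝ) h1
  set C : ℝ := (((t+u+2).choose (t+2) : ℕ):ℝ)
  set C1 : ℝ := (((t+u+2).choose (t+1) : ℕ):ℝ)
  have hsq : (C * ((t:ℝ)+2))^2 = (C1 * ((u:ℝ)+1))^2 := by rw [hch]
  have e1 : 4*((t:ℝ)+2)^2*C^2*(((t:ℝ)+1)^(2*t+3)*((u:ℝ)+1)^(2*u+1))
      = 4*C1^2*((t:ℝ)+1)^(2*t+3)*((u:ℝ)+1)^(2*u+3) := by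
    linear_combination (4*((t:ℝ)+1)^(2*t+3)*((u:ℝ)+1)^(2*u+1)) * hsq
  calc N/2 * N^(2*(t+u+2)) = N^(2*(t+u+2)+1)/2 := by rw [pow_succ]; ring
    _ ≤ (8 * ((t:ℝ)+1)^(2*t+3) * ((u:ℝ)+1)^(2*u+3) * C1^2)/2 := by
        have hNc : N^(2*(t+u+2)+1) = ((t:ℝ)+(u:ℝ)+2)^(2*(t+u+2)+1) := by
          rw [hN]; push_cast; ring
        rw [hNc]
        linarith [hKL]
    _ = 4*C1^2*((t:ℝ)+1)^(2*t+3)*((u:ℝ)+1)^(2*u+3) := by ring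
    _ = _ := e1.symm

lemma endpointB (t u : ℕ) (hu : 1 ≤ u) :
    (((t+u+2:ℕ)):ℝ)/2 ≤ 4 * ((t:ℝ)+2)^2 * (((t+u+2).choose (t+2) : ℕ):ℝ)^2 *
      ((((t:ℝ)+2)/((t+u+2:ℕ):ℝ))^(2*t+3) * ((1 - ((t:ℝ)+2)/((t+u+2:ℕ):ℝ)))^(2*u+1)) := by
  set N : ℝ := ((t+u+2:ℕ):ℝ) with hN
  have hNpos : (0:ℝ) < N := by rw [hN]; positivity
  have h1mB : 1 - ((t:ℝ)+2)/N = (u:ℝ)/N := by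
    rw [hN]; field_simp; push_cast; ring
  rw [h1mB, div_pow, div_pow,
    show (4:ℝ) * ((t:ℝ)+2)^2 * (((t+u+2).choose (t+2) : ℕ):ℝ)^2 *
        (((t:ℝ)+2)^(2*t+3)/N^(2*t+3)*((u:ℝ)^(2*u+1)/N^(2*u+1)))
      = 4 * ((t:ℝ)+2)^2 * (((t+u+2).choose (t+2) : ℕ):ℝ)^2 *
        (((t:ℝ)+2)^(2*t+3)*(u:ℝ)^(2*u+1))/(N^(2*t+3)*N^(2*u+1)) from by ring,
    ← pow_add, show (2*t+3)+(2*u+1) = 2*(t+u+2) from by ring,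
    le_div_iff₀ (pow_pos hNpos _)]
  have hKL := KL (t+2) u (by omega) hu
  rw [show t+2+u = t+u+2 from by ring] at hKL
  rw [show 2*(t+2)+1 = 2*t+5 from by ring] at hKL
  push_cast at hKL
  set C : ℝ := (((t+u+2).choose (t+2) : ℕ):ℝ)
  calc N/2 * N^(2*(t+u+2)) = N^(2*(t+u+2)+1)/2 := by rw [pow_succ]; ring
    _ ≤ (8 * ((t:ℝ)+2)^(2*t+5) * (u:ℝ)^(2*u+1) * C^2)/2 := by
        have hNc : N^(2*(t+u+2)+1) = ((t:ℝ)+(u:ℝ)+2)^(2*(t+u+2)+1) := by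
          rw [hN]; push_cast; ring
        rw [hNc]
        linarith [hKL]
    _ = 4 * ((t:ℝ)+2)^2 * C^2 * (((t:ℝ)+2)^(2*t+3)*(u:ℝ)^(2*u+1)) := by
        rw [show 2*t+5 = (2*t+3)+2 from by ring, pow_add]
        ring

/-- For `Y ~ Binomial(n, p)` with `n ≥ 2` and `1/n ≤ p ≤ 1 - 1/n`, the mean absolute
deviation of `Y` is at least `std(Y)/√2`, where `std(Y) = √(np(1-p))`. -/
theorem stmt_4 (n : ℕ) (p : ℝ) (hn : 2 ≤ n) (hp₁ : 1 / (n : ℝ) ≤ p)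
    (hp₂ : p ≤ 1 - 1 / (n : ℝ)) :
    Real.sqrt ((n : ℝ) * p * (1 - p)) / Real.sqrt 2 ≤
      ∑ i ∈ Finset.range (n + 1),
        (n.choose i : ℝ) * p ^ i * (1 - p) ^ (n - i) * |(i : ℝ) - (n : ℝ) * p| := by
  have hn0 : (0:ℝ) < n := by
    have : (2:ℝ) ≤ n := by exact_mod_cast hn
    linarith
  have hp0 : 0 < p := lt_of_lt_of_le (by positivity) hp₁
  have hq0 : 0 < 1 - p := by
    have h1 : (0:ℝ) < 1/(n:ℝ) := by positivity
    linarith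
  have h1np : 1 ≤ (n:ℝ)*p := by
    rw [div_le_iff₀ hn0] at hp₁
    linarith
  have hnpn : (n:ℝ)*p ≤ (n:ℝ) - 1 := by
    have h2 : p * n ≤ (1 - 1/(n:ℝ)) * n := mul_le_mul_of_nonneg_right hp₂ hn0.le
    have h3 : (1 - 1/(n:ℝ)) * n = n - 1 := by field_simp
    linarith [h2]
  have hfl : ((⌊(n:ℝ)*p⌋₊ : ℕ) : ℝ) ≤ (n:ℝ)*p := Nat.floor_le (by positivity)
  have hfl2 : (n:ℝ)*p < (⌊(n:ℝ)*p⌋₊ : ℕ) + 1 := Nat.lt_floor_add_one _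
  have hflge1 : 1 ≤ ⌊(n:ℝ)*p⌋₊ := Nat.le_floor (by exact_mod_cast h1np)
  have hflen : ⌊(n:ℝ)*p⌋₊ + 1 ≤ n := by
    by_contra hcon
    push_neg at hcon
    have h4 : (n:ℝ) ≤ (⌊(n:ℝ)*p⌋₊ : ℕ) := by exact_mod_cast (by omega : n ≤ ⌊(n:ℝ)*p⌋₊)
    linarith [hfl.trans hnpn]
  obtain ⟨t, ht⟩ : ∃ t, ⌊(n:ℝ)*p⌋₊ + 1 = t + 2 := ⟨⌊(n:ℝ)*p⌋₊ - 1, by omega⟩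
  have hFt : (⌊(n:ℝ)*p⌋₊ : ℕ) = t + 1 := by omega
  obtain ⟨u, hnu⟩ : ∃ u, n = t + u + 2 := ⟨n - t - 2, by omega⟩
  rw [mad_formula n (⌊(n:ℝ)*p⌋₊ + 1) p (by push_cast; linarith) (by push_cast; linarith)
    hflen, ht]
  rw [hFt] at hfl hfl2
  clear hflge1 hflen ht hFt hp₁ hp₂
  subst hnu
  rw [show t + u + 2 - (t+2) = u from by omega]
  push_cast at hfl hfl2
  set N : ℝ := ((t+u+2:ℕ):ℝ) with hN
  set C : ℝ := (((t+u+2).choose (t+2) : ℕ):ℝ) with hC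
  have hflN : (t:ℝ)+1 ≤ N*p := by rw [hN]; push_cast; linarith [hfl]
  have hfl2N : N*p < (t:ℝ)+2 := by rw [hN]; push_cast; linarith [hfl2]
  have hC0 : (0:ℝ) < C := by
    rw [hC]
    exact_mod_cast Nat.choose_pos (by omega : t+2 ≤ t+u+2)
  have hkey : N/2 ≤ 4*((t:ℝ)+2)^2*C^2*(p^(2*t+3)*(1-p)^(2*u+1)) := by
    rcases Nat.eq_zero_or_pos u with rfl | hupos
    · have h4 : N*p = (t:ℝ)+1 := by
        have l2 : N*p ≤ (t:ℝ)+1 := by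
          have : N - 1 = (t:ℝ)+1 := by rw [hN]; push_cast; ring
          linarith [hnpn]
        linarith [hflN]
      have hpe : p = ((t:ℝ)+1)/N := by
        rw [eq_div_iff (ne_of_gt hn0)]
        linarith [h4]
      rw [hpe]
      exact endpointA t 0
    · have hgeA : ((t:ℝ)+1)/N ≤ p := by
        rw [div_le_iff₀ hn0]
        linarith [hflN]
      have hleB : p ≤ ((t:ℝ)+2)/N := by
        rw [le_div_iff₀ hn0]
        linarith [hfl2N]
      have hb1 : ((t:ℝ)+2)/N ≤ 1 := by
        rw [div_le_one hn0, hN]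
        push_cast
        linarith [Nat.cast_nonneg (α := ℝ) u]
      have hmin := unimodal_min (2*t+2) (2*u) (((t:ℝ)+1)/N) (((t:ℝ)+2)/N) p
        (by positivity) hb1 hgeA hleB
      have hmin' : min ((((t:ℝ)+1)/N)^(2*t+3)*(1-((t:ℝ)+1)/N)^(2*u+1))
          ((((t:ℝ)+2)/N)^(2*t+3)*(1-((t:ℝ)+2)/N)^(2*u+1)) ≤ p^(2*t+3)*(1-p)^(2*u+1) := hmin
      have hAB : N/2 ≤ 4*((t:ℝ)+2)^2*C^2 *
          min ((((t:ℝ)+1)/N)^(2*t+3)*(1-((t:ℝ)+1)/N)^(2*u+1))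
            ((((t:ℝ)+2)/N)^(2*t+3)*(1-((t:ℝ)+2)/N)^(2*u+1)) := by
        rcases min_cases ((((t:ℝ)+1)/N)^(2*t+3)*(1-((t:ℝ)+1)/N)^(2*u+1))
            ((((t:ℝ)+2)/N)^(2*t+3)*(1-((t:ℝ)+2)/N)^(2*u+1)) with ⟨he, _⟩ | ⟨he, _⟩ <;>
          rw [he]
        · exact endpointA t u
        · exact endpointB t u hupos
      calc N/2 ≤ _ := hAB
        _ ≤ 4*((t:ℝ)+2)^2*C^2*(p^(2*t+3)*(1-p)^(2*u+1)) := by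
            apply mul_le_mul_of_nonneg_left hmin'
            positivity
  -- conclude
  have hS0 : (0:ℝ) ≤ 2*((t+2:ℕ):ℝ)*(1-p)*(C*p^(t+2)*(1-p)^u) := by
    apply mul_nonneg (mul_nonneg (by positivity) hq0.le)
    exact mul_nonneg (mul_nonneg hC0.le (pow_nonneg hp0.le _)) (pow_nonneg hq0.le _)
  have hSsq : N*p*(1-p)/2 ≤ (2*((t+2:ℕ):ℝ)*(1-p)*(C*p^(t+2)*(1-p)^u))^2 := by
    have e : (2*((t+2:ℕ):ℝ)*(1-p)*(C*p^(t+2)*(1-p)^u))^2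
        = (p*(1-p)) * (4*((t:ℝ)+2)^2*C^2*(p^(2*t+3)*(1-p)^(2*u+1))) := by
      push_cast
      ring
    rw [e]
    calc N*p*(1-p)/2 = (p*(1-p))*(N/2) := by ring
      _ ≤ (p*(1-p))*(4*((t:ℝ)+2)^2*C^2*(p^(2*t+3)*(1-p)^(2*u+1))) := by
          apply mul_le_mul_of_nonneg_left hkey
          positivity
  calc Real.sqrt (N*p*(1-p)) / Real.sqrt 2 = Real.sqrt (N*p*(1-p)/2) := by
        rw [Real.sqrt_div (by positivity)]
    _ ≤ Real.sqrt ((2*((t+2:ℕ):ℝ)*(1-p)*(C*p^(t+2)*(1-p)^u))^2) := Real.sqrt_le_sqrt hSsq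
    _ = 2*((t+2:ℕ):ℝ)*(1-p)*(C*p^(t+2)*(1-p)^u) := Real.sqrt_sq hS0
end

section
/- If X ~ Binomial(n, n_e/n) with 1 ≤ n_e ≤ n/2 and n ≥ 2, then E|X - n_e| ≥ √(n_e)/2. -/
open Finset


open Finset

lemma tele (n : ℕ) (p q : ℝ) (hpq : p + q = 1) :
    ∀ m, m ≤ n →
      ∑ i ∈ Finset.range (m + 1), ((n : ℝ) * p - i) * (n.choose i : ℝ) * p ^ i * q ^ (n - i)
        = (m + 1 : ℝ) * (n.choose (m + 1) : ℝ) * p ^ (m + 1) * q ^ (n - m) := by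
  intro m
  induction m with
  | zero =>
    intro _
    rw [Finset.sum_range_one]
    simp [Nat.choose_one_right]
  | succ m ih =>
    intro h
    have hm : m ≤ n := le_trans (Nat.le_succ m) h
    rw [Finset.sum_range_succ, ih hm]
    have hc : ((n.choose (m + 2) : ℝ)) * (m + 2) = (n.choose (m + 1) : ℝ) * ((n : ℝ) - (m + 1)) := by
      have := Nat.choose_succ_right_eq n (m + 1)
      have hcast : ((n - (m + 1) : ℕ) : ℝ) = (n : ℝ) - (m + 1) := by
        push_cast [Nat.cast_sub h]; ring
      calc ((n.choose (m + 2) : ℝ)) * (m + 2)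
          = ((n.choose (m + 2) * (m + 2) : ℕ) : ℝ) := by push_cast; ring
        _ = ((n.choose (m + 1) * (n - (m + 1)) : ℕ) : ℝ) := by rw [this]
        _ = (n.choose (m + 1) : ℝ) * ((n : ℝ) - (m + 1)) := by push_cast [hcast]; ring
    have hq : q ^ (n - m) = q * q ^ (n - (m + 1)) := by
      have : n - m = (n - (m + 1)) + 1 := by omega
      rw [this, pow_succ]; ring
    have hq1 : q = 1 - p := by linarith
    rw [hq, hq1]
    have hps : p ^ (m + 2) = p * p ^ (m + 1) := by rw [pow_succ]; ring
    push_cast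
    linear_combination (-(p * p ^ (m + 1) * (1 - p) ^ (n - (m + 1)))) * hc

lemma dec_step (m : ℕ) (hm : 1 ≤ m) :
    (((m : ℝ) + 2) / ((m : ℝ) + 1)) ^ (m + 2) ≤ (((m : ℝ) + 1) / (m : ℝ)) ^ (m + 1) := by
  have ha : (0 : ℝ) < m := by exact_mod_cast hm
  have h2 : (0 : ℝ) < (m : ℝ) + 1 := by linarith
  have h3 : (0 : ℝ) < (m : ℝ) + 2 := by linarith
  set a : ℝ := (m : ℝ) with ha'
  have hd : (0 : ℝ) < a * (a + 2) := by positivity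
  have hB : 1 + (m + 2 : ℕ) * (1 / (a * (a + 2))) ≤ (1 + 1 / (a * (a + 2))) ^ (m + 2) := by
    apply one_add_mul_le_pow
    have : (0:ℝ) ≤ 1 / (a * (a + 2)) := by positivity
    linarith
  have key : (a + 1) / a ≤ (1 + 1 / (a * (a + 2))) ^ (m + 2) := by
    refine le_trans (le_of_eq ?_) hB
    push_cast
    field_simp
    ring
  have e2 : ((a + 1) / a) = (1 + 1 / (a * (a + 2))) * ((a + 2) / (a + 1)) := by
    field_simp
    ring
  have hpow : ((a + 1) / a) ^ (m + 2)
      = (1 + 1 / (a * (a + 2))) ^ (m + 2) * ((a + 2) / (a + 1)) ^ (m + 2) := by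
    rw [e2, mul_pow]
  have hge : ((a + 1) / a) * ((a + 2) / (a + 1)) ^ (m + 2) ≤ ((a + 1) / a) ^ (m + 2) := by
    rw [hpow]
    apply mul_le_mul_of_nonneg_right key
    positivity
  have hfrac : (0 : ℝ) < (a + 1) / a := by positivity
  have : ((a + 1) / a) * ((a + 2) / (a + 1)) ^ (m + 2)
      ≤ ((a + 1) / a) * ((a + 1) / a) ^ (m + 1) := by
    calc ((a + 1) / a) * ((a + 2) / (a + 1)) ^ (m + 2) ≤ ((a + 1) / a) ^ (m + 2) := hge
      _ = ((a + 1) / a) * ((a + 1) / a) ^ (m + 1) := by rw [← pow_succ']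
  exact le_of_mul_le_mul_left this hfrac

lemma dec_le : ∀ m n : ℕ, 1 ≤ m → m ≤ n →
    (((n : ℝ) + 1) / (n : ℝ)) ^ (n + 1) ≤ (((m : ℝ) + 1) / (m : ℝ)) ^ (m + 1) := by
  intro m n hm hmn
  induction n, hmn using Nat.le_induction with
  | base => exact le_refl _
  | succ n hn ih =>
    refine le_trans ?_ ih
    have := dec_step n (le_trans hm hn)
    push_cast
    convert this using 2
    · rfl
    · push_cast; ring

lemma cb_sq : ∀ k : ℕ, 1 ≤ k → (16 : ℝ) ^ k ≤ 4 * k * (Nat.centralBinom k : ℝ) ^ 2 := by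
  intro k hk
  induction k with
  | zero => omega
  | succ k ih =>
    rcases Nat.eq_or_lt_of_le hk with h | h
    · obtain rfl : k = 0 := by omega
      norm_num [Nat.centralBinom]
    · have hk1 : 1 ≤ k := by omega
      have IH := ih hk1
      have hrec : ((k : ℝ) + 1) * (Nat.centralBinom (k + 1) : ℝ)
          = 2 * (2 * k + 1) * (Nat.centralBinom k : ℝ) := by
        have := Nat.succ_mul_centralBinom_succ k
        have := congrArg (Nat.cast : ℕ → ℝ) this
        push_cast at this
        linarith
      have hkpos : (0 : ℝ) < (k : ℝ) + 1 := by positivity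
      have hsq : ((k : ℝ) + 1) ^ 2 * (Nat.centralBinom (k + 1) : ℝ) ^ 2
          = 4 * (2 * k + 1) ^ 2 * (Nat.centralBinom k : ℝ) ^ 2 := by
        calc ((k : ℝ) + 1) ^ 2 * (Nat.centralBinom (k + 1) : ℝ) ^ 2
            = (((k : ℝ) + 1) * (Nat.centralBinom (k + 1) : ℝ)) ^ 2 := by ring
          _ = (2 * (2 * (k:ℝ) + 1) * (Nat.centralBinom k : ℝ)) ^ 2 := by rw [hrec]
          _ = 4 * (2 * (k:ℝ) + 1) ^ 2 * (Nat.centralBinom k : ℝ) ^ 2 := by ring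
      -- goal: 16^(k+1) ≤ 4*(k+1)*Cb(k+1)^2
      have h1 : (16 : ℝ) ^ (k + 1) * ((k:ℝ) + 1) ≤ 4 * ((k:ℝ) + 1) * (Nat.centralBinom (k + 1) : ℝ) ^ 2 * ((k:ℝ)+1) := by
        have : (16 : ℝ) ^ (k + 1) * ((k:ℝ) + 1) = 16 * ((k:ℝ)+1) * (16:ℝ)^k := by ring
        rw [this]
        have h2 : 4 * ((k:ℝ) + 1) * (Nat.centralBinom (k + 1) : ℝ) ^ 2 * ((k:ℝ)+1)
            = 4 * (4 * (2 * (k:ℝ) + 1) ^ 2 * (Nat.centralBinom k : ℝ) ^ 2) := by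
          rw [← hsq]; ring
        rw [h2]
        nlinarith [IH, sq_nonneg ((Nat.centralBinom k : ℝ))]
      exact le_of_mul_le_mul_right (by push_cast; push_cast at h1; linarith) hkpos

lemma base_bound (k : ℕ) (hk : 1 ≤ k) :
    Real.sqrt k / 2 ≤ (k : ℝ) * ((2 * k).choose k : ℝ) / 4 ^ k := by
  have hC : ((2 * k).choose k : ℝ) = (Nat.centralBinom k : ℝ) := by rw [Nat.centralBinom]
  rw [hC]
  set C : ℝ := (Nat.centralBinom k : ℝ) with hCdef
  have hCpos : 0 < C := by
    rw [hCdef]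
    exact_mod_cast Nat.centralBinom_pos k
  have hkpos : (0:ℝ) < k := by exact_mod_cast hk
  have h16 : (16 : ℝ) ^ k ≤ 4 * k * C ^ 2 := cb_sq k hk
  have key : (4:ℝ) ^ k * Real.sqrt k ≤ 2 * k * C := by
    have e1 : (4:ℝ) ^ k * Real.sqrt k = Real.sqrt ((16:ℝ) ^ k * k) := by
      rw [Real.sqrt_mul (by positivity),
        show (16:ℝ)^k = ((4:ℝ)^k)^2 by rw [← pow_mul, mul_comm, pow_mul]; norm_num,
        Real.sqrt_sq (by positivity)]
    have e2 : (2:ℝ) * k * C = Real.sqrt ((2 * k * C)^2) := by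
      rw [Real.sqrt_sq (by positivity)]
    rw [e1, e2]
    apply Real.sqrt_le_sqrt
    nlinarith [h16, hkpos]
  rw [div_le_div_iff₀ (by norm_num) (by positivity : (0:ℝ) < 4 ^ k)]
  nlinarith [key]


lemma G_mono (k : ℕ) (hk : 1 ≤ k) : ∀ n, 2 * k ≤ n →
    (k : ℝ) * ((2 * k).choose k : ℝ) / 4 ^ k ≤
      2 * k * (n.choose k : ℝ) * (k : ℝ) ^ k * ((n - k : ℕ) : ℝ) ^ (n - k + 1) / (n : ℝ) ^ (n + 1) := by
  intro n hn
  induction n, hn using Nat.le_induction with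
  | base =>
    have hs : 2 * k - k = k := by omega
    rw [hs]
    have hkpos : (0:ℝ) < k := by exact_mod_cast hk
    apply le_of_eq
    push_cast
    rw [show (4:ℝ) = 2^2 by norm_num, ← pow_mul]
    field_simp
    ring
  | succ n hn ih =>
    refine le_trans ih ?_
    obtain ⟨m, rfl⟩ : ∃ m, n = k + m := ⟨n - k, by omega⟩
    have hm1 : 1 ≤ m := by omega
    have hs1 : k + m - k = m := by omega
    have hs2 : k + m + 1 - k = m + 1 := by omega
    rw [hs1, hs2]
    have hkpos : (0:ℝ) < k := by exact_mod_cast hk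
    have hmpos : (0:ℝ) < m := by exact_mod_cast hm1
    have hNpos : (0:ℝ) < ((k:ℝ) + m) := by linarith
    -- cross-multiplied form of dec_le
    have hdec : ((m:ℝ)) ^ (m+1) * ((k:ℝ) + m + 1) ^ (k + m + 1)
        ≤ ((m:ℝ) + 1) ^ (m+1) * ((k:ℝ) + m) ^ (k + m + 1) := by
      have h := dec_le m (k + m) hm1 (by omega)
      rw [div_pow, div_pow, div_le_div_iff₀ (by positivity) (by positivity)] at h
      push_cast at h
      calc ((m:ℝ)) ^ (m+1) * ((k:ℝ) + m + 1) ^ (k + m + 1)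
          = ((k:ℝ) + m + 1) ^ (k + m + 1) * (m:ℝ) ^ (m+1) := by ring
        _ ≤ ((m:ℝ) + 1) ^ (m + 1) * ((k:ℝ) + m) ^ (k + m + 1) := h
    -- choose identity
    have hch : ((k + m).choose k : ℝ) * ((k:ℝ) + m + 1) = ((k + m + 1).choose k : ℝ) * ((m:ℝ) + 1) := by
      have h1 : (k + m + 1).choose (k + 1) * (k + 1) = (k + m + 1).choose k * (m + 1) := by
        have := Nat.choose_succ_right_eq (k + m + 1) k
        rwa [show k + m + 1 - k = m + 1 by omega] at this
      have h2 : (k + m + 1) * (k + m).choose k = (k + m + 1).choose (k + 1) * (k + 1) :=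
        Nat.add_one_mul_choose_eq (k + m) k
      have h3 : (k + m + 1) * (k + m).choose k = (k + m + 1).choose k * (m + 1) := by omega
      have := congrArg (Nat.cast : ℕ → ℝ) h3
      push_cast at this
      linarith
    rw [div_le_div_iff₀ (by positivity) (by positivity)]
    push_cast
    calc 2 * (k:ℝ) * ((k + m).choose k : ℝ) * (k:ℝ) ^ k * (m:ℝ) ^ (m + 1) * ((k:ℝ) + m + 1) ^ (k + m + 1 + 1)
        = (2 * (k:ℝ) * (k:ℝ) ^ k * ((k + m).choose k : ℝ) * ((k:ℝ) + m + 1)) *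
            ((m:ℝ) ^ (m + 1) * ((k:ℝ) + m + 1) ^ (k + m + 1)) := by ring
      _ ≤ (2 * (k:ℝ) * (k:ℝ) ^ k * ((k + m).choose k : ℝ) * ((k:ℝ) + m + 1)) *
            (((m:ℝ) + 1) ^ (m + 1) * ((k:ℝ) + m) ^ (k + m + 1)) := by
          apply mul_le_mul_of_nonneg_left hdec
          positivity
      _ = (2 * (k:ℝ) * (k:ℝ) ^ k * ((m:ℝ) + 1) ^ (m + 1) * ((k:ℝ) + m) ^ (k + m + 1)) *
            (((k + m).choose k : ℝ) * ((k:ℝ) + m + 1)) := by ring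
      _ = (2 * (k:ℝ) * (k:ℝ) ^ k * ((m:ℝ) + 1) ^ (m + 1) * ((k:ℝ) + m) ^ (k + m + 1)) *
            (((k + m + 1).choose k : ℝ) * ((m:ℝ) + 1)) := by rw [hch]
      _ = 2 * (k:ℝ) * ((k + m + 1).choose k : ℝ) * (k:ℝ) ^ k * ((m:ℝ) + 1) ^ (m + 1 + 1) * ((k:ℝ) + m) ^ (k + m + 1) := by ring

/-- If `X ~ Binomial(n, n_e/n)` with `1 ≤ n_e ≤ n/2` and `n ≥ 2`, then
`E|X - n_e| ≥ √(n_e)/2`. -/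
theorem stmt_6 (n nₑ : ℕ) (hn : 2 ≤ n) (h₁ : 1 ≤ nₑ) (h₂ : 2 * nₑ ≤ n) :
    Real.sqrt (nₑ : ℝ) / 2 ≤
      ∑ i ∈ Finset.range (n + 1),
        (n.choose i : ℝ) * ((nₑ : ℝ) / n) ^ i * (1 - (nₑ : ℝ) / n) ^ (n - i) *
          |(i : ℝ) - (nₑ : ℝ)| := by
  have hkn : nₑ ≤ n := by omega
  have hn0 : (0:ℝ) < n := by exact_mod_cast (by omega : 0 < n)
  set p : ℝ := (nₑ : ℝ) / n with hp
  set q : ℝ := 1 - p with hq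
  have hpq : p + q = 1 := by rw [hq]; ring
  have hnp : (n:ℝ) * p = nₑ := by rw [hp]; field_simp
  -- pointwise abs decomposition
  have habs : ∀ i : ℕ, |(i:ℝ) - nₑ| = ((i:ℝ) - nₑ) + 2 * max ((nₑ:ℝ) - i) 0 := by
    intro i
    rcases le_total ((nₑ:ℝ)) i with h | h
    · rw [abs_of_nonneg (by linarith), max_eq_right (by linarith)]; ring
    · rw [abs_of_nonpos (by linarith), max_eq_left (by linarith)]; ring
  have hsplit : ∑ i ∈ Finset.range (n + 1),
        (n.choose i : ℝ) * p ^ i * q ^ (n - i) * |(i : ℝ) - (nₑ : ℝ)|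
      = (∑ i ∈ Finset.range (n + 1), (n.choose i : ℝ) * p ^ i * q ^ (n - i) * ((i:ℝ) - nₑ))
        + 2 * ∑ i ∈ Finset.range (n + 1), (n.choose i : ℝ) * p ^ i * q ^ (n - i) * max ((nₑ:ℝ) - i) 0 := by
    rw [Finset.mul_sum, ← Finset.sum_add_distrib]
    apply Finset.sum_congr rfl
    intro i _
    rw [habs i]
    ring
  -- first sum is zero
  have hzero : ∑ i ∈ Finset.range (n + 1), (n.choose i : ℝ) * p ^ i * q ^ (n - i) * ((i:ℝ) - nₑ) = 0 := by
    have h := tele n p q hpq n le_rfl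
    rw [Nat.choose_eq_zero_of_lt (by omega)] at h
    simp only [Nat.cast_zero] at h
    have h' : ∑ i ∈ Finset.range (n + 1), ((n : ℝ) * p - i) * (n.choose i : ℝ) * p ^ i * q ^ (n - i) = 0 := by
      rw [h]; ring
    have : ∑ i ∈ Finset.range (n + 1), (n.choose i : ℝ) * p ^ i * q ^ (n - i) * ((i:ℝ) - nₑ)
        = - ∑ i ∈ Finset.range (n + 1), ((n : ℝ) * p - i) * (n.choose i : ℝ) * p ^ i * q ^ (n - i) := by
      rw [← Finset.sum_neg_distrib]
      apply Finset.sum_congr rfl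
      intro i _
      rw [hnp]
      ring
    rw [this, h']
    ring
  -- second sum
  have hsecond : ∑ i ∈ Finset.range (n + 1), (n.choose i : ℝ) * p ^ i * q ^ (n - i) * max ((nₑ:ℝ) - i) 0
      = (nₑ:ℝ) * (n.choose nₑ : ℝ) * p ^ nₑ * q ^ (n - nₑ + 1) := by
    have hsub : Finset.range nₑ ⊆ Finset.range (n + 1) := Finset.range_subset_range.2 (by omega)
    rw [← Finset.sum_subset hsub ?_]
    · have e1 : ∑ i ∈ Finset.range nₑ, (n.choose i : ℝ) * p ^ i * q ^ (n - i) * max ((nₑ:ℝ) - i) 0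
          = ∑ i ∈ Finset.range ((nₑ - 1) + 1), ((n : ℝ) * p - i) * (n.choose i : ℝ) * p ^ i * q ^ (n - i) := by
        rw [show (nₑ - 1) + 1 = nₑ by omega]
        apply Finset.sum_congr rfl
        intro i hi
        have hi' : i < nₑ := Finset.mem_range.1 hi
        have hiR : (i:ℝ) < (nₑ:ℝ) := by exact_mod_cast hi'
        rw [max_eq_left (by linarith), hnp]
        ring
      rw [e1, tele n p q hpq (nₑ - 1) (by omega)]
      rw [show (nₑ - 1) + 1 = nₑ by omega, show n - (nₑ - 1) = n - nₑ + 1 by omega]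
      have : ((nₑ - 1 : ℕ) : ℝ) + 1 = (nₑ : ℝ) := by
        have : ((nₑ - 1 : ℕ) : ℝ) = (nₑ : ℝ) - 1 := by
          push_cast [Nat.cast_sub h₁]; ring
        rw [this]; ring
      rw [this]
    · intro i hi hni
      have : nₑ ≤ i := by
        by_contra hc
        exact hni (Finset.mem_range.2 (by omega))
      have : ((nₑ:ℝ) - i) ≤ 0 := by
        have : (nₑ:ℝ) ≤ i := by exact_mod_cast this
        linarith
      rw [max_eq_right this]
      ring
  -- combine
  rw [hsplit, hzero, hsecond]
  -- rewrite p^nₑ * q^(n-nₑ+1) in terms of naturals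
  have hqcast : q = ((n - nₑ : ℕ) : ℝ) / n := by
    rw [hq, hp, Nat.cast_sub hkn]
    field_simp
  have hpows : p ^ nₑ * q ^ (n - nₑ + 1)
      = (nₑ : ℝ) ^ nₑ * ((n - nₑ : ℕ) : ℝ) ^ (n - nₑ + 1) / (n : ℝ) ^ (n + 1) := by
    rw [hp, hqcast, div_pow, div_pow, div_mul_div_comm, ← pow_add,
      show nₑ + (n - nₑ + 1) = n + 1 by omega]
  have hG := G_mono nₑ h₁ n h₂
  have hB := base_bound nₑ h₁
  calc Real.sqrt nₑ / 2 ≤ (nₑ : ℝ) * ((2 * nₑ).choose nₑ : ℝ) / 4 ^ nₑ := hB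
    _ ≤ 2 * nₑ * (n.choose nₑ : ℝ) * (nₑ : ℝ) ^ nₑ * ((n - nₑ : ℕ) : ℝ) ^ (n - nₑ + 1) / (n : ℝ) ^ (n + 1) := hG
    _ = 0 + 2 * ((nₑ:ℝ) * (n.choose nₑ : ℝ) * (p ^ nₑ * q ^ (n - nₑ + 1))) := by
        rw [hpows]; ring
    _ = 0 + 2 * ((nₑ:ℝ) * (n.choose nₑ : ℝ) * p ^ nₑ * q ^ (n - nₑ + 1)) := by ring
end

section
/- Let P(T) denote the optimal value of a convex program min f(x, χ_T) subject to convex constraints g_i(x, χ_T) ≤ 0 and affine constraints h_j(x, χ_T) = 0, where χ_T is the multiplicity vector of a multiset T with elements from a finite set S. Then the expectation of P(S_k) when S_k is a uniformly random k-subset of S (without replacement) is at most the expectation of P(S_k) when S_k consists of k i.i.d. uniform draws from S (with replacement). -/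
open Finset

namespace Stmt11Aux


variable {n k : ℕ}

/-- multiplicity vector of a tuple -/
def chi (M : Fin k → Fin n) (s : Fin n) : ℕ := (Finset.univ.filter (fun i => M i = s)).card

/-- coupling weight -/
noncomputable def sq (n k : ℕ) (M : Fin k → Fin n) (T : Finset (Fin n)) : ℝ :=
  if Finset.image M Finset.univ ⊆ T then
    (((n - (Finset.image M Finset.univ).card).choose
        (k - (Finset.image M Finset.univ).card) : ℕ) : ℝ)⁻¹
  else 0

lemma image_card_le (M : Fin k → Fin n) : (Finset.image M Finset.univ).card ≤ k := by
  simpa using Finset.card_image_le (s := (Finset.univ : Finset (Fin k))) (f := M)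

lemma choose_pos (hk : k ≤ n) (s : ℕ) (hs : s ≤ k) :
    0 < ((n - s).choose (k - s)) :=
  Nat.choose_pos (Nat.sub_le_sub_right hk s)

lemma sq_nonneg (M : Fin k → Fin n) (T : Finset (Fin n)) : 0 ≤ sq n k M T := by
  unfold sq; split <;> positivity

lemma sup_count (hk : k ≤ n) (D : Finset (Fin n)) (hD : D.card ≤ k) :
    (((Finset.univ : Finset (Fin n)).powersetCard k).filter fun T => D ⊆ T).card
      = (n - D.card).choose (k - D.card) := by
  have hcompl : Dᶜ.card = n - D.card := by
    simp [Finset.card_compl]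
  rw [← hcompl, ← Finset.card_powersetCard]
  apply Finset.card_bij' (fun T _ => T \ D) (fun U _ => U ∪ D)
  · intro T hT
    rw [Finset.mem_filter, Finset.mem_powersetCard_univ] at hT
    rw [Finset.mem_powersetCard]
    refine ⟨fun x hx => ?_, ?_⟩
    · rw [Finset.mem_sdiff] at hx
      simpa [Finset.mem_compl] using hx.2
    · rw [Finset.card_sdiff_of_subset hT.2, hT.1]
  · intro U hU
    rw [Finset.mem_powersetCard] at hU
    have hdisj : Disjoint U D := by
      rw [Finset.disjoint_left]
      intro x hx hxD
      have := hU.1 hx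
      simp [Finset.mem_compl] at this
      exact this hxD
    rw [Finset.mem_filter, Finset.mem_powersetCard_univ]
    constructor
    · rw [Finset.card_union_of_disjoint hdisj, hU.2]
      exact Nat.sub_add_cancel hD
    · exact Finset.subset_union_right
  · intro T hT
    rw [Finset.mem_filter] at hT
    exact Finset.sdiff_union_of_subset hT.2
  · intro U hU
    rw [Finset.mem_powersetCard] at hU
    have hdisj : Disjoint U D := by
      rw [Finset.disjoint_left]
      intro x hx hxD
      have := hU.1 hx
      simp [Finset.mem_compl] at this
      exact this hxD
    rw [Finset.union_sdiff_distrib, Finset.sdiff_self, Finset.union_empty,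
      Finset.sdiff_eq_self_of_disjoint hdisj]

lemma sq_sum_T (hk : k ≤ n) (M : Fin k → Fin n) :
    ∑ T ∈ (Finset.univ : Finset (Fin n)).powersetCard k, sq n k M T = 1 := by
  classical
  set D := Finset.image M Finset.univ with hDdef
  set s := D.card with hsdef
  have hs : s ≤ k := image_card_le M
  have hch : (0:ℝ) < (((n - s).choose (k - s) : ℕ) : ℝ) := by
    exact_mod_cast choose_pos hk s hs
  unfold sq
  rw [← Finset.sum_filter]
  rw [Finset.sum_const, sup_count hk D hs]
  rw [nsmul_eq_mul]
  exact mul_inv_cancel₀ (ne_of_gt hch)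

lemma image_comp_perm (σ : Equiv.Perm (Fin n)) (M : Fin k → Fin n) :
    Finset.image (σ ∘ M) Finset.univ = (Finset.image M Finset.univ).image σ := by
  rw [Finset.image_image]

lemma sq_perm (σ : Equiv.Perm (Fin n)) {T T' : Finset (Fin n)}
    (hσ : ∀ x, x ∈ T ↔ σ x ∈ T') (M : Fin k → Fin n) :
    sq n k (σ ∘ M) T' = sq n k M T := by
  have hsub : Finset.image (σ ∘ M) Finset.univ ⊆ T' ↔ Finset.image M Finset.univ ⊆ T := by
    rw [image_comp_perm]
    constructor
    · intro hi x hx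
      rw [hσ]
      exact hi (Finset.mem_image_of_mem σ hx)
    · intro hi x hx
      rw [Finset.mem_image] at hx
      obtain ⟨y, hy, rfl⟩ := hx
      rw [← hσ]
      exact hi hy
  have hcard : (Finset.image (σ ∘ M) Finset.univ).card = (Finset.image M Finset.univ).card := by
    rw [image_comp_perm, Finset.card_image_of_injective _ σ.injective]
  unfold sq
  rw [hcard]
  by_cases h : Finset.image M Finset.univ ⊆ T
  · rw [if_pos (hsub.2 h), if_pos h]
  · rw [if_neg (fun hc => h (hsub.1 hc)), if_neg h]

lemma chi_perm (σ : Equiv.Perm (Fin n)) (M : Fin k → Fin n) (s : Fin n) :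
    chi (σ ∘ M) (σ s) = chi M s := by
  unfold chi
  congr 1
  apply Finset.filter_congr
  intro i _
  simp [σ.injective.eq_iff]

lemma sum_chi (M : Fin k → Fin n) : ∑ s, chi M s = k := by
  have := Finset.card_eq_sum_card_fiberwise
    (f := M) (s := (Finset.univ : Finset (Fin k))) (t := Finset.univ) (fun x _ => Finset.mem_univ _)
  unfold chi
  simpa using this.symm

lemma chi_eq_zero {M : Fin k → Fin n} {T : Finset (Fin n)}
    (hM : Finset.image M Finset.univ ⊆ T) {s : Fin n} (hs : s ∉ T) : chi M s = 0 := by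
  unfold chi
  rw [Finset.card_eq_zero, Finset.filter_eq_empty_iff]
  intro i _ hi
  exact hs (hM (by rw [← hi]; exact Finset.mem_image_of_mem M (Finset.mem_univ i)))

lemma perm_of_card {T T' : Finset (Fin n)} (h : T.card = T'.card) :
    ∃ σ : Equiv.Perm (Fin n), ∀ x, x ∈ T ↔ σ x ∈ T' := by
  classical
  have h1 : Fintype.card {x // x ∈ T} = Fintype.card {x // x ∈ T'} := by
    simp [Fintype.card_coe, h]
  have h2 : Fintype.card {x // x ∉ T} = Fintype.card {x // x ∉ T'} := by
    have e1 : Fintype.card {x // x ∉ T} = Fintype.card {x : Fin n // x ∈ Tᶜ} :=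
      Fintype.card_congr (Equiv.subtypeEquivRight (by simp [Finset.mem_compl]))
    have e2 : Fintype.card {x // x ∉ T'} = Fintype.card {x : Fin n // x ∈ T'ᶜ} :=
      Fintype.card_congr (Equiv.subtypeEquivRight (by simp [Finset.mem_compl]))
    rw [e1, e2]
    simp [Fintype.card_coe, Finset.card_compl, h]
  let eT : {x // x ∈ T} ≃ {x // x ∈ T'} := Fintype.equivOfCardEq h1
  let eC : {x // x ∉ T} ≃ {x // x ∉ T'} := Fintype.equivOfCardEq h2
  refine ⟨(Equiv.sumCompl (· ∈ T)).symm.trans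
    ((Equiv.sumCongr eT eC).trans (Equiv.sumCompl (· ∈ T'))), fun x => ?_⟩
  by_cases hx : x ∈ T
  · simp only [Equiv.trans_apply, Equiv.sumCompl_symm_apply_of_pos hx,
      Equiv.sumCongr_apply, Sum.map_inl, Equiv.sumCompl_apply_inl]
    exact ⟨fun _ => (eT ⟨x, hx⟩).2, fun _ => hx⟩
  · simp only [Equiv.trans_apply, Equiv.sumCompl_symm_apply_of_neg hx,
      Equiv.sumCongr_apply, Sum.map_inr, Equiv.sumCompl_apply_inr]
    exact ⟨fun hc => absurd hc hx, fun hc => absurd hc (eC ⟨x, hx⟩).2⟩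


lemma sq_eq_zero {M : Fin k → Fin n} {T : Finset (Fin n)}
    (h : ¬ Finset.image M Finset.univ ⊆ T) : sq n k M T = 0 := by
  unfold sq; rw [if_neg h]

lemma Q_perm {T T' : Finset (Fin n)} (σ : Equiv.Perm (Fin n))
    (hσ : ∀ x, x ∈ T ↔ σ x ∈ T') :
    (∑ M : Fin k → Fin n, sq n k M T) = ∑ M : Fin k → Fin n, sq n k M T' := by
  have h1 : (∑ M : Fin k → Fin n, sq n k M T)
      = ∑ M : Fin k → Fin n, sq n k (σ ∘ M) T' := by
    exact Finset.sum_congr rfl fun M _ => (sq_perm σ hσ M).symm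
  rw [h1]
  exact Fintype.sum_equiv (Equiv.piCongrRight fun _ : Fin k => σ)
    (fun M => sq n k (σ ∘ M) T') (fun M => sq n k M T') (fun M => rfl)

lemma Q_val (hk : k ≤ n) {T : Finset (Fin n)}
    (hT : T ∈ (Finset.univ : Finset (Fin n)).powersetCard k) :
    (∑ M : Fin k → Fin n, sq n k M T) = (n : ℝ) ^ k / (n.choose k : ℝ) := by
  classical
  have hC : (0:ℝ) < (n.choose k : ℝ) := by exact_mod_cast Nat.choose_pos hk
  have hconst : ∀ T' ∈ (Finset.univ : Finset (Fin n)).powersetCard k,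
      (∑ M : Fin k → Fin n, sq n k M T') = ∑ M : Fin k → Fin n, sq n k M T := by
    intro T' hT'
    rw [Finset.mem_powersetCard_univ] at hT hT'
    obtain ⟨σ, hσ⟩ := perm_of_card (hT'.trans hT.symm)
    exact Q_perm σ hσ
  have hsum : ∑ T' ∈ (Finset.univ : Finset (Fin n)).powersetCard k,
      ∑ M : Fin k → Fin n, sq n k M T' = (n : ℝ) ^ k := by
    rw [Finset.sum_comm]
    rw [Finset.sum_congr rfl fun M _ => sq_sum_T hk M]
    simp [Finset.card_univ]
  rw [Finset.sum_congr rfl hconst, Finset.sum_const] at hsum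
  have hcard : ((Finset.univ : Finset (Fin n)).powersetCard k).card = n.choose k := by
    simp [Finset.card_powersetCard]
  rw [hcard, nsmul_eq_mul] at hsum
  field_simp
  linarith [hsum]

lemma B_eq (hk : k ≤ n) {T : Finset (Fin n)}
    (hT : T ∈ (Finset.univ : Finset (Fin n)).powersetCard k) (s : Fin n) :
    (∑ M : Fin k → Fin n, sq n k M T * (chi M s : ℝ))
      = (∑ M : Fin k → Fin n, sq n k M T) * (if s ∈ T then 1 else 0) := by
  classical
  rw [Finset.mem_powersetCard_univ] at hT
  by_cases hs : s ∈ T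
  · rw [if_pos hs, mul_one]
    have hk0 : 0 < k := by
      rw [← hT]
      exact Finset.card_pos.2 ⟨s, hs⟩
    have hconst : ∀ s' ∈ T,
        (∑ M : Fin k → Fin n, sq n k M T * (chi M s' : ℝ))
          = ∑ M : Fin k → Fin n, sq n k M T * (chi M s : ℝ) := by
      intro s' hs'
      have hσ : ∀ x, x ∈ T ↔ (Equiv.swap s s') x ∈ T := by
        intro x
        rcases eq_or_ne x s with rfl | hxs
        · rw [Equiv.swap_apply_left]; exact ⟨fun _ => hs', fun _ => hs⟩
        · rcases eq_or_ne x s' with rfl | hxs'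
          · rw [Equiv.swap_apply_right]; exact ⟨fun _ => hs, fun _ => hs'⟩
          · rw [Equiv.swap_apply_of_ne_of_ne hxs hxs']
      have h1 : (∑ M : Fin k → Fin n, sq n k M T * (chi M s' : ℝ))
          = ∑ M : Fin k → Fin n,
              sq n k ((Equiv.swap s s') ∘ M) T * (chi ((Equiv.swap s s') ∘ M) s' : ℝ) := by
        exact (Fintype.sum_equiv (Equiv.piCongrRight fun _ : Fin k => Equiv.swap s s')
          (fun M => sq n k ((Equiv.swap s s') ∘ M) T * (chi ((Equiv.swap s s') ∘ M) s' : ℝ))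
          (fun M => sq n k M T * (chi M s' : ℝ)) (fun M => rfl)).symm
      rw [h1]
      apply Finset.sum_congr rfl
      intro M _
      rw [sq_perm (Equiv.swap s s') hσ M]
      congr 2
      have := chi_perm (Equiv.swap s s') M s
      rwa [Equiv.swap_apply_left] at this
    have hsumT : ∑ s' ∈ T, (∑ M : Fin k → Fin n, sq n k M T * (chi M s' : ℝ))
        = (k : ℝ) * ∑ M : Fin k → Fin n, sq n k M T := by
      rw [Finset.sum_comm, Finset.mul_sum]
      apply Finset.sum_congr rfl
      intro M _
      rw [← Finset.mul_sum]
      by_cases hM : Finset.image M Finset.univ ⊆ T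
      · have hsub : ∑ s' ∈ T, (chi M s' : ℝ) = (k : ℝ) := by
          have : ∑ s' ∈ (Finset.univ : Finset (Fin n)), (chi M s' : ℝ) = (k : ℝ) := by
            exact_mod_cast congrArg (Nat.cast : ℕ → ℝ) (sum_chi M)
          rw [← this]
          apply Finset.sum_subset (Finset.subset_univ T)
          intro x _ hx
          rw [chi_eq_zero hM hx, Nat.cast_zero]
        rw [hsub, mul_comm]
      · rw [sq_eq_zero hM, zero_mul, mul_zero]
    have h2 : ∑ s' ∈ T, (∑ M : Fin k → Fin n, sq n k M T * (chi M s' : ℝ))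
        = (k : ℝ) * ∑ M : Fin k → Fin n, sq n k M T * (chi M s : ℝ) := by
      rw [Finset.sum_congr rfl hconst, Finset.sum_const, hT, nsmul_eq_mul]
    rw [h2] at hsumT
    have hkne : (k : ℝ) ≠ 0 := by exact_mod_cast hk0.ne'
    exact mul_left_cancel₀ hkne hsumT
  · rw [if_neg hs, mul_zero]
    apply Finset.sum_eq_zero
    intro M _
    by_cases hM : Finset.image M Finset.univ ⊆ T
    · rw [chi_eq_zero hM hs]; simp
    · rw [sq_eq_zero hM]; simp

end Stmt11Aux

open Stmt11Aux in
/-- Replacement lemma for stochastic convex programs. Let `P(χ)` be the optimal value of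
`min f(x, χ)` s.t. `gᵢ(x, χ) ≤ 0` and `hⱼ(x, χ) = 0`, where `f` and the `gᵢ` are jointly
convex and the `hⱼ` are affine, and `χ` is the multiplicity vector of a multiset of
elements of `S = Fin n`. Then the expected optimum over a uniformly random `k`-subset
(sampling without replacement) is at most the expected optimum over `k` i.i.d. uniform
draws (sampling with replacement). -/

theorem stmt_11 (n d m l k : ℕ) (hn : 0 < n) (hk : k ≤ n)
    (f : ((Fin d → ℝ) × (Fin n → ℝ)) → ℝ)
    (g : Fin m → ((Fin d → ℝ) × (Fin n → ℝ)) → ℝ)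
    (h : Fin l → ((Fin d → ℝ) × (Fin n → ℝ)) → ℝ)
    (hf : ConvexOn ℝ Set.univ f)
    (hg : ∀ i, ConvexOn ℝ Set.univ (g i))
    (hh : ∀ j, ∃ (L : ((Fin d → ℝ) × (Fin n → ℝ)) →ₗ[ℝ] ℝ) (c : ℝ),
      ∀ z, h j z = L z + c)
    (P : (Fin n → ℕ) → ℝ)
    (hP : ∀ χ : Fin n → ℕ,
      IsLeast {v : ℝ | ∃ x : Fin d → ℝ,
        (∀ i, g i (x, fun s => (χ s : ℝ)) ≤ 0) ∧
        (∀ j, h j (x, fun s => (χ s : ℝ)) = 0) ∧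
        v = f (x, fun s => (χ s : ℝ))} (P χ)) :
    (∑ T ∈ Finset.univ.powersetCard k, P (fun s => if s ∈ T then 1 else 0)) /
        (n.choose k : ℝ) ≤
      (∑ M : Fin k → Fin n,
          P (fun s => (Finset.univ.filter (fun i => M i = s)).card)) / (n : ℝ) ^ k := by
  classical
  have hC : (0:ℝ) < (n.choose k : ℝ) := by exact_mod_cast Nat.choose_pos hk
  have hN : (0:ℝ) < (n:ℝ) ^ k := by positivity
  set C : ℝ := (n.choose k : ℝ) with hCdef
  set N : ℝ := (n:ℝ) ^ k with hNdef
  -- choose optimal solutions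
  choose X hgX hhX hfX using fun χ => (hP χ).1
  -- key inequality per subset T
  have key : ∀ T ∈ (Finset.univ : Finset (Fin n)).powersetCard k,
      P (fun s => if s ∈ T then 1 else 0)
        ≤ ∑ M : Fin k → Fin n, (sq n k M T * (C / N)) * P (chi M) := by
    intro T hT
    set w : (Fin k → Fin n) → ℝ := fun M => sq n k M T * (C / N) with hwdef
    have hw0 : ∀ M ∈ (Finset.univ : Finset (Fin k → Fin n)), 0 ≤ w M := by
      intro M _
      exact mul_nonneg (sq_nonneg M T) (by positivity)
    have hw1 : ∑ M : Fin k → Fin n, w M = 1 := by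
      simp only [hwdef, ← Finset.sum_mul, Q_val hk hT]
      field_simp
      rw [← hCdef, mul_div_assoc, div_self hC.ne', mul_one, hNdef]
    set z : (Fin k → Fin n) → ((Fin d → ℝ) × (Fin n → ℝ)) :=
      fun M => (X (chi M), fun s => (chi M s : ℝ)) with hzdef
    set zb : ((Fin d → ℝ) × (Fin n → ℝ)) := ∑ M : Fin k → Fin n, w M • z M with hzbdef
    have hz2 : zb.2 = fun s => (((if s ∈ T then 1 else 0 : ℕ) : ℝ)) := by
      funext s
      have h1 : zb.2 s = ∑ M : Fin k → Fin n, w M * (chi M s : ℝ) := by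
        rw [hzbdef, Prod.snd_sum]
        rw [Finset.sum_apply]
        apply Finset.sum_congr rfl
        intro M _
        simp [hzdef, Pi.smul_apply, smul_eq_mul]
      rw [h1]
      have h2 : ∑ M : Fin k → Fin n, w M * (chi M s : ℝ)
          = (C / N) * ∑ M : Fin k → Fin n, sq n k M T * (chi M s : ℝ) := by
        rw [Finset.mul_sum]
        apply Finset.sum_congr rfl
        intro M _
        simp [hwdef]; ring
      rw [h2, B_eq hk hT s, Q_val hk hT]
      have hNne : N ≠ 0 := hN.ne'
      have hCne : C ≠ 0 := hC.ne'
      rw [← hCdef, ← hNdef]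
      split_ifs <;> field_simp <;> norm_num
    have hgzb : ∀ i, g i zb ≤ 0 := by
      intro i
      have hmem : ∀ M ∈ (Finset.univ : Finset (Fin k → Fin n)), z M ∈ (Set.univ : Set _) :=
        fun M _ => Set.mem_univ _
      have h1 := (hg i).map_sum_le hw0 hw1 hmem
      rw [← hzbdef] at h1
      refine h1.trans (Finset.sum_nonpos fun M _ => ?_)
      have h2 : g i (z M) ≤ 0 := hgX (chi M) i
      have := mul_le_mul_of_nonneg_left h2 (hw0 M (Finset.mem_univ M))
      simpa using this
    have hhzb : ∀ j, h j zb = 0 := by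
      intro j
      obtain ⟨L, c, hLc⟩ := hh j
      have h1 : L zb = ∑ M : Fin k → Fin n, w M * L (z M) := by
        rw [hzbdef, map_sum]
        apply Finset.sum_congr rfl
        intro M _
        rw [map_smul, smul_eq_mul]
      have h2 : h j zb = ∑ M : Fin k → Fin n, w M * h j (z M) := by
        rw [hLc, h1]
        have : ∑ M : Fin k → Fin n, w M * h j (z M)
            = ∑ M : Fin k → Fin n, (w M * L (z M) + w M * c) := by
          apply Finset.sum_congr rfl
          intro M _
          rw [hLc]; ring
        rw [this, Finset.sum_add_distrib, ← Finset.sum_mul, hw1, one_mul]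
      rw [h2]
      apply Finset.sum_eq_zero
      intro M _
      rw [hhX (chi M) j, mul_zero]
    have hfzb : f zb ≤ ∑ M : Fin k → Fin n, w M * P (chi M) := by
      have hmem : ∀ M ∈ (Finset.univ : Finset (Fin k → Fin n)), z M ∈ (Set.univ : Set _) :=
        fun M _ => Set.mem_univ _
      have h1 := hf.map_sum_le hw0 hw1 hmem
      rw [← hzbdef] at h1
      refine h1.trans (le_of_eq ?_)
      apply Finset.sum_congr rfl
      intro M _
      rw [hfX (chi M)]
      rfl
    have hprod : (zb.1, fun s => (((if s ∈ T then 1 else 0 : ℕ) : ℝ))) = zb := by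
      rw [← hz2]
    have hPle : P (fun s => if s ∈ T then 1 else 0) ≤ f zb := by
      refine (hP (fun s => if s ∈ T then 1 else 0)).2 ⟨zb.1, fun i => ?_, fun j => ?_, ?_⟩
      · show g i (zb.1, fun s => (((if s ∈ T then 1 else 0 : ℕ) : ℝ))) ≤ 0
        rw [hprod]; exact hgzb i
      · show h j (zb.1, fun s => (((if s ∈ T then 1 else 0 : ℕ) : ℝ))) = 0
        rw [hprod]; exact hhzb j
      · show f zb = f (zb.1, fun s => (((if s ∈ T then 1 else 0 : ℕ) : ℝ)))
        rw [hprod]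
    exact hPle.trans hfzb
  -- conclude
  have main : (∑ T ∈ (Finset.univ : Finset (Fin n)).powersetCard k,
        P (fun s => if s ∈ T then 1 else 0))
      ≤ (C / N) * ∑ M : Fin k → Fin n, P (chi M) := by
    calc (∑ T ∈ (Finset.univ : Finset (Fin n)).powersetCard k,
            P (fun s => if s ∈ T then 1 else 0))
        ≤ ∑ T ∈ (Finset.univ : Finset (Fin n)).powersetCard k,
            ∑ M : Fin k → Fin n, (sq n k M T * (C / N)) * P (chi M) :=
          Finset.sum_le_sum key
      _ = ∑ M : Fin k → Fin n, ∑ T ∈ (Finset.univ : Finset (Fin n)).powersetCard k,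
            (sq n k M T * (C / N)) * P (chi M) := Finset.sum_comm
      _ = (C / N) * ∑ M : Fin k → Fin n, P (chi M) := by
          rw [Finset.mul_sum]
          apply Finset.sum_congr rfl
          intro M _
          have : ∑ T ∈ (Finset.univ : Finset (Fin n)).powersetCard k,
              (sq n k M T * (C / N)) * P (chi M)
            = (∑ T ∈ (Finset.univ : Finset (Fin n)).powersetCard k, sq n k M T)
                * ((C / N) * P (chi M)) := by
            rw [Finset.sum_mul]
            exact Finset.sum_congr rfl fun T _ => by ring
          rw [this, sq_sum_T hk M, one_mul]
  rw [div_le_div_iff₀ hC hN]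
  have hfinal := mul_le_mul_of_nonneg_right main hN.le
  calc (∑ T ∈ (Finset.univ : Finset (Fin n)).powersetCard k,
          P (fun s => if s ∈ T then 1 else 0)) * N
      ≤ ((C / N) * ∑ M : Fin k → Fin n, P (chi M)) * N := hfinal
    _ = (∑ M : Fin k → Fin n, P (chi M)) * C := by
        field_simp
end

section
/- Condition the distribution of k i.i.d. uniform samples (as an ordered tuple) from a set S of size n on the event A_T that an associated uniformly chosen k-set T ⊇ support(M) equals a fixed k-subset T. Then for each s ∈ T, the conditional expected multiplicity of s among the k samples equals 1. -/
open Finset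

/-- The joint probability that the ordered tuple of `k` i.i.d. uniform samples from
`S = Fin n` equals `M` and that the associated die roll — a uniformly random `k`-subset
among those containing the support of `M` — equals `T`. -/
noncomputable def jointProb (n k : ℕ) (M : Fin k → Fin n) (T : Finset (Fin n)) : ℝ :=
  if Finset.image M Finset.univ ⊆ T ∧ T.card = k then
    (1 / (n : ℝ) ^ k) *
      (1 / ((Finset.univ.powersetCard k).filter
        (fun U => Finset.image M Finset.univ ⊆ U)).card)
  else 0

lemma exists_perm_image {n : ℕ} (T T' : Finset (Fin n)) (h : T.card = T'.card) :
    ∃ σ : Equiv.Perm (Fin n), T.image σ = T' := by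
  classical
  have h' : (Tᶜ).card = (T'ᶜ).card := by simp [Finset.card_compl, h]
  let e : {x // x ∈ T} ≃ {x // x ∈ T'} := T.equivOfCardEq h
  let e' : {x // ¬ x ∈ T} ≃ {x // ¬ x ∈ T'} :=
    ((Equiv.subtypeEquivRight (fun x => by simp)).trans (Tᶜ.equivOfCardEq h')).trans
      (Equiv.subtypeEquivRight (fun x => by simp))
  refine ⟨(Equiv.sumCompl (· ∈ T)).symm.trans ((e.sumCongr e').trans
      (Equiv.sumCompl (· ∈ T'))), ?_⟩
  have hsub : T.image ((Equiv.sumCompl (· ∈ T)).symm.trans ((e.sumCongr e').trans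
      (Equiv.sumCompl (· ∈ T')))) ⊆ T' := by
    intro y hy
    simp only [Finset.mem_image] at hy
    obtain ⟨x, hx, rfl⟩ := hy
    simp [Equiv.sumCompl_symm_apply_of_pos hx]
  refine Finset.eq_of_subset_of_card_le hsub ?_
  rw [Finset.card_image_of_injective _ (Equiv.injective _), h]

lemma filter_card_perm {n k : ℕ} (s : Finset (Fin n)) (σ : Equiv.Perm (Fin n)) :
    ((Finset.univ.powersetCard k).filter (fun U => s.image σ ⊆ U)).card
      = ((Finset.univ.powersetCard k).filter (fun U => s ⊆ U)).card := by
  classical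
  apply Finset.card_bij' (fun U _ => U.image σ.symm) (fun U _ => U.image σ)
  · intro U _; simp [Finset.image_image]
  · intro U _; simp [Finset.image_image]
  · intro U hU
    simp only [Finset.mem_filter, Finset.mem_powersetCard_univ] at hU ⊢
    refine ⟨by rw [Finset.card_image_of_injective _ σ.symm.injective]; exact hU.1, ?_⟩
    intro x hx
    have := hU.2 (Finset.mem_image_of_mem σ hx)
    simpa using Finset.mem_image_of_mem σ.symm this
  · intro U hU
    simp only [Finset.mem_filter, Finset.mem_powersetCard_univ] at hU ⊢
    refine ⟨by rw [Finset.card_image_of_injective _ σ.injective]; exact hU.1, ?_⟩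
    intro y hy
    simp only [Finset.mem_image] at hy
    obtain ⟨x, hx, rfl⟩ := hy
    exact Finset.mem_image_of_mem σ (hU.2 hx)

lemma jointProb_perm {n k : ℕ} (M : Fin k → Fin n) (T : Finset (Fin n))
    (σ : Equiv.Perm (Fin n)) :
    jointProb n k (σ ∘ M) (T.image σ) = jointProb n k M T := by
  classical
  have himg : Finset.image (σ ∘ M) Finset.univ = (Finset.image M Finset.univ).image σ := by
    rw [Finset.image_image]
  have hcond : (Finset.image (σ ∘ M) Finset.univ ⊆ T.image σ ∧ (T.image σ).card = k)
      ↔ (Finset.image M Finset.univ ⊆ T ∧ T.card = k) := by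
    rw [himg, Finset.card_image_of_injective _ σ.injective,
      Finset.image_subset_image_iff σ.injective]
  unfold jointProb
  rw [if_congr hcond rfl rfl]
  by_cases h : Finset.image M Finset.univ ⊆ T ∧ T.card = k
  · rw [if_pos h, if_pos h, himg, filter_card_perm]
  · rw [if_neg h, if_neg h]

lemma sum_over_T {n k : ℕ} (hk : k ≤ n) (M : Fin k → Fin n) :
    ∑ T ∈ Finset.univ.powersetCard k, jointProb n k M T = 1 / (n : ℝ) ^ k := by
  classical
  set s := Finset.image M Finset.univ with hs
  set F := (Finset.univ.powersetCard k).filter (fun U => s ⊆ U) with hF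
  have hsc : s.card ≤ k := le_trans (Finset.card_image_le) (by simp)
  have hN : F.Nonempty := by
    obtain ⟨U, hsub, hcard⟩ := Finset.exists_superset_card_eq hsc (by simpa using hk)
    exact ⟨U, by simp [hF, Finset.mem_powersetCard_univ, hcard, hsub]⟩
  have h1 : ∑ T ∈ Finset.univ.powersetCard k, jointProb n k M T
      = ∑ T ∈ F, ((1 / (n : ℝ) ^ k) * (1 / (F.card : ℝ))) := by
    rw [hF, Finset.sum_filter]
    apply Finset.sum_congr rfl
    intro T hTm
    rw [Finset.mem_powersetCard_univ] at hTm
    unfold jointProb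
    by_cases h : s ⊆ T
    · rw [if_pos ⟨h, hTm⟩, if_pos h]
    · rw [if_neg h, if_neg (by tauto)]
  rw [h1, Finset.sum_const, nsmul_eq_mul]
  have hcard : (F.card : ℝ) ≠ 0 := by
    exact_mod_cast Finset.card_ne_zero_of_mem hN.choose_spec
  rw [mul_comm, mul_assoc, one_div_mul_cancel hcard, mul_one]

lemma sum_comp_perm {n k : ℕ} (σ : Equiv.Perm (Fin n)) (g : (Fin k → Fin n) → ℝ) :
    ∑ M : Fin k → Fin n, g (σ ∘ M) = ∑ M : Fin k → Fin n, g M := by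
  exact Fintype.sum_equiv (Equiv.arrowCongr (Equiv.refl (Fin k)) σ) _ _ (fun M => rfl)

/-- Conditioned on the event `A_T` that the uniformly chosen `k`-set containing the
support of the sample tuple `M` equals a fixed `k`-subset `T`, each `s ∈ T` has
conditional expected multiplicity exactly `1` among the `k` samples; moreover
`Pr[A_T] = 1/C(n,k)`. -/
theorem stmt_12 (n k : ℕ) (hn : 0 < n) (hk : k ≤ n) (T : Finset (Fin n))
    (hT : T.card = k) :
    (∑ M : Fin k → Fin n, jointProb n k M T) = 1 / (n.choose k : ℝ) ∧
      ∀ s ∈ T,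
        (∑ M : Fin k → Fin n,
            jointProb n k M T * ((Finset.univ.filter (fun i => M i = s)).card : ℝ)) =
          (∑ M : Fin k → Fin n, jointProb n k M T) * 1 := by
  classical
  -- constancy in T
  have hconst : ∀ T' : Finset (Fin n), T'.card = k →
      (∑ M : Fin k → Fin n, jointProb n k M T') = ∑ M : Fin k → Fin n, jointProb n k M T := by
    intro T' hT'
    obtain ⟨σ, hσ⟩ := exists_perm_image T T' (hT.trans hT'.symm)
    calc ∑ M : Fin k → Fin n, jointProb n k M T'
        = ∑ M : Fin k → Fin n, jointProb n k (σ ∘ M) T' := by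
          rw [sum_comp_perm σ (fun M => jointProb n k M T')]
      _ = ∑ M : Fin k → Fin n, jointProb n k M T := by
          apply Finset.sum_congr rfl; intro M _
          rw [← hσ, jointProb_perm]
  -- total
  have htot : (n.choose k : ℝ) * (∑ M : Fin k → Fin n, jointProb n k M T) = 1 := by
    have h1 : ∑ T' ∈ Finset.univ.powersetCard k,
        (∑ M : Fin k → Fin n, jointProb n k M T') = 1 := by
      rw [Finset.sum_comm]
      rw [Finset.sum_congr rfl (fun M _ => sum_over_T hk M)]
      rw [Finset.sum_const, nsmul_eq_mul]
      have : (Fintype.card (Fin k → Fin n) : ℝ) = (n : ℝ) ^ k := by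
        simp [Fintype.card_fun]
      rw [Finset.card_univ, this]
      have hn' : (n : ℝ) ^ k ≠ 0 := pow_ne_zero _ (Nat.cast_ne_zero.mpr hn.ne')
      field_simp
    rw [Finset.sum_congr rfl (fun T' hT' => hconst T'
      (Finset.mem_powersetCard_univ.mp hT')), Finset.sum_const,
      Finset.card_powersetCard, Finset.card_univ, Fintype.card_fin, nsmul_eq_mul] at h1
    exact h1
  have hchoose : (n.choose k : ℝ) ≠ 0 := Nat.cast_ne_zero.mpr (Nat.choose_pos hk).ne'
  have first : (∑ M : Fin k → Fin n, jointProb n k M T) = 1 / (n.choose k : ℝ) := by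
    field_simp at htot ⊢
    linarith [htot]
  refine ⟨first, ?_⟩
  intro s hs
  set f : Fin n → ℝ := fun t => ∑ M : Fin k → Fin n,
    jointProb n k M T * ((Finset.univ.filter (fun i => M i = t)).card : ℝ) with hf
  -- symmetry
  have hsym : ∀ t ∈ T, f t = f s := by
    intro t ht
    set σ := Equiv.swap s t with hσdef
    have hσT : T.image σ = T := by
      apply Finset.eq_of_subset_of_card_le
      · intro y hy
        simp only [Finset.mem_image] at hy
        obtain ⟨x, hx, rfl⟩ := hy
        by_cases h1 : x = s
        · simpa [hσdef, h1, Equiv.swap_apply_left] using ht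
        · by_cases h2 : x = t
          · simpa [hσdef, h2, Equiv.swap_apply_right] using hs
          · simpa [hσdef, Equiv.swap_apply_of_ne_of_ne h1 h2] using hx
      · rw [Finset.card_image_of_injective _ (Equiv.injective _)]
    have := sum_comp_perm σ (fun M => jointProb n k M T *
      ((Finset.univ.filter (fun i => M i = t)).card : ℝ))
    rw [hf]
    simp only
    rw [← this]
    apply Finset.sum_congr rfl
    intro M _
    congr 1
    · conv_lhs => rw [← hσT]
      rw [jointProb_perm]
    · congr 1
      apply Finset.card_nbij' (fun i => i) (fun i => i) <;> intro i hi <;>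
        simp only [Finset.coe_filter, Set.mem_setOf_eq, Finset.mem_filter, Finset.mem_univ, true_and, Function.comp_apply] at hi ⊢
      · have : M i = σ.symm t := by rw [← hi]; simp
        rw [this]; simp [hσdef, Equiv.swap_apply_right]
      · rw [hi]; simp [hσdef, Equiv.swap_apply_right]
  -- sum over T
  have hksum : ∑ t ∈ T, f t = (k : ℝ) * (∑ M : Fin k → Fin n, jointProb n k M T) := by
    rw [hf]
    simp only
    rw [Finset.sum_comm]
    rw [Finset.mul_sum]
    apply Finset.sum_congr rfl
    intro M _
    rw [← Finset.mul_sum]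
    by_cases hMT : Finset.image M Finset.univ ⊆ T
    · have : ∑ t ∈ T, ((Finset.univ.filter (fun i => M i = t)).card : ℝ) = (k : ℝ) := by
        rw [← Nat.cast_sum]
        norm_cast
        have := Finset.card_eq_sum_card_fiberwise
          (f := M) (s := (Finset.univ : Finset (Fin k))) (t := T)
          (fun x _ => hMT (Finset.mem_image_of_mem M (Finset.mem_univ x)))
        rw [← this]
        simp
      rw [this, mul_comm]
    · have : jointProb n k M T = 0 := by unfold jointProb; rw [if_neg (by tauto)]
      rw [this]; ring
  have hk0 : (0:ℕ) < k := hT ▸ Finset.card_pos.mpr ⟨s, hs⟩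
  have hfc : ∑ t ∈ T, f t = (k : ℝ) * f s := by
    rw [Finset.sum_congr rfl hsym, Finset.sum_const, nsmul_eq_mul, hT]
  have : (k : ℝ) * f s = (k : ℝ) * (∑ M : Fin k → Fin n, jointProb n k M T) := by
    rw [← hfc, hksum]
  have hkne : (k : ℝ) ≠ 0 := Nat.cast_ne_zero.mpr hk0.ne'
  have := mul_left_cancel₀ hkne this
  rw [mul_one]
  exact this
end

section
/- Let M(T) be the optimal value of the fractional transportation LP between a k-subset T of a metric space S of n points (each point in T with supply 1/k) and all of S (each point with demand 1/n). Then for any k ≤ n/2, M(T) = (n/k - 1)·M(S∖T); in particular M(T) ≥ M(S∖T). -/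
open Finset
open Pointwise

/-- `transportVal n d T` is the optimal value of the fractional transportation LP between
the subset `T` of the `n`-point space (each point of `T` with supply `1/|T|`) and the whole
space (each point with demand `1/n`), with costs `d`. -/
noncomputable def transportVal (n : ℕ) (d : Fin n → Fin n → ℝ) (T : Finset (Fin n)) : ℝ :=
  sInf {c : ℝ | ∃ x : Fin n → Fin n → ℝ,
    (∀ i j, 0 ≤ x i j) ∧
    (∀ i ∈ T, ∑ j, x i j = 1 / (T.card : ℝ)) ∧
    (∀ j, ∑ i ∈ T, x i j = 1 / (n : ℝ)) ∧
    c = ∑ i ∈ T, ∑ j, d i j * x i j}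

namespace Stmt14

variable {n : ℕ}

/-- elementary matrix -/
def delta (a b i j : Fin n) : ℝ := (if i = a then 1 else 0) * (if j = b then 1 else 0)

lemma delta_row (a b i : Fin n) : ∑ j, delta a b i j = if i = a then 1 else 0 := by
  unfold delta
  rw [← Finset.mul_sum, Finset.sum_ite_eq' univ b (fun _ => (1:ℝ))]
  simp

lemma delta_col (U : Finset (Fin n)) (a b j : Fin n) (ha : a ∈ U) :
    ∑ i ∈ U, delta a b i j = if j = b then 1 else 0 := by
  unfold delta
  rw [← Finset.sum_mul, Finset.sum_ite_eq' U a (fun _ => (1:ℝ))]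
  simp [ha]

lemma delta_cost (d : Fin n → Fin n → ℝ) (U : Finset (Fin n)) (a b : Fin n) (ha : a ∈ U) :
    ∑ i ∈ U, ∑ j, d i j * delta a b i j = d a b := by
  unfold delta
  have : ∀ i : Fin n, ∑ j, d i j * ((if i = a then 1 else 0) * (if j = b then 1 else 0))
      = if i = a then d i b else 0 := by
    intro i
    by_cases hia : i = a <;> simp [hia, Finset.sum_ite_eq' univ b (fun j => d i j)]
  rw [Finset.sum_congr rfl (fun i _ => this i), Finset.sum_ite_eq' U a (fun i => d i b)]
  simp [ha]

lemma delta_trace (U : Finset (Fin n)) (a b : Fin n) (ha : a ∈ U) :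
    ∑ i ∈ U, delta a b i i = if b = a then 1 else 0 := by
  unfold delta
  have : ∀ i : Fin n, (if i = a then (1:ℝ) else 0) * (if i = b then 1 else 0)
      = if i = a then (if a = b then 1 else 0) else 0 := by
    intro i; by_cases hia : i = a <;> simp [hia]
  rw [Finset.sum_congr rfl (fun i _ => this i), Finset.sum_ite_eq' U a]
  by_cases hab : a = b
  · subst hab; simp [ha]
  · simp [ha, hab, Ne.symm hab]


variable (n) in
/-- feasible transport plans supported on rows of `U` -/
def K (U : Finset (Fin n)) : Set (Fin n → Fin n → ℝ) :=
  {x | (∀ i j, 0 ≤ x i j) ∧ (∀ i ∈ U, ∑ j, x i j = 1 / (U.card : ℝ)) ∧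
    (∀ j, ∑ i ∈ U, x i j = 1 / (n : ℝ)) ∧ (∀ i ∉ U, ∀ j, x i j = 0)}

def cost (d : Fin n → Fin n → ℝ) (U : Finset (Fin n)) (x : Fin n → Fin n → ℝ) : ℝ :=
  ∑ i ∈ U, ∑ j, d i j * x i j

lemma cost_continuous (d : Fin n → Fin n → ℝ) (U : Finset (Fin n)) :
    Continuous (cost d U) := by
  unfold cost
  refine continuous_finset_sum _ (fun i _ => continuous_finset_sum _ (fun j _ => ?_))
  exact continuous_const.mul ((continuous_apply j).comp (continuous_apply i))

lemma trace_continuous (U : Finset (Fin n)) :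
    Continuous (fun x : Fin n → Fin n → ℝ => ∑ i ∈ U, x i i) := by
  refine continuous_finset_sum _ (fun i _ => ?_)
  exact (continuous_apply i).comp (continuous_apply i)

lemma transportVal_eq_image (d : Fin n → Fin n → ℝ) (U : Finset (Fin n)) :
    transportVal n d U = sInf (cost d U '' K n U) := by
  unfold transportVal
  congr 1
  ext c
  constructor
  · rintro ⟨x, hx0, hrow, hcol, hc⟩
    refine ⟨fun i j => if i ∈ U then x i j else 0, ⟨?_, ?_, ?_, ?_⟩, ?_⟩
    · intro i j; by_cases h : i ∈ U <;> simp [h, hx0 i j]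
    · intro i hi; simpa [hi] using hrow i hi
    · intro j; rw [← hcol j]; exact Finset.sum_congr rfl (fun i hi => by simp [hi])
    · intro i hi j; simp [hi]
    · rw [hc]; unfold cost
      exact (Finset.sum_congr rfl (fun i hi => by simp [hi])).symm
  · rintro ⟨x, ⟨hx0, hrow, hcol, _⟩, hc⟩
    exact ⟨x, hx0, hrow, hcol, hc.symm⟩

lemma K_nonempty (U : Finset (Fin n)) (hm : 0 < U.card) (hn : 0 < n) :
    (K n U).Nonempty := by
  refine ⟨fun i j => if i ∈ U then 1 / ((U.card : ℝ) * n) else 0, ?_, ?_, ?_, ?_⟩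
  · intro i j; by_cases h : i ∈ U <;> simp [h] <;> positivity
  · intro i hi
    have hm' : (U.card : ℝ) ≠ 0 := by positivity
    have hn' : (n : ℝ) ≠ 0 := by positivity
    simp [hi, Finset.sum_const]
    field_simp
  · intro j
    have hm' : (U.card : ℝ) ≠ 0 := by positivity
    have hn' : (n : ℝ) ≠ 0 := by positivity
    rw [Finset.sum_congr rfl (fun i hi => if_pos hi), Finset.sum_const, nsmul_eq_mul]
    field_simp
  · intro i hi j; simp [hi]

lemma K_bounded (U : Finset (Fin n)) (x : Fin n → Fin n → ℝ) (hx : x ∈ K n U)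
    (hn : 0 < n) : ∀ i j, x i j ≤ 1 := by
  obtain ⟨hx0, hrow, hcol, hout⟩ := hx
  intro i j
  by_cases hi : i ∈ U
  · calc x i j ≤ ∑ i' ∈ U, x i' j :=
        Finset.single_le_sum (fun i' _ => hx0 i' j) hi
    _ = 1 / (n : ℝ) := hcol j
    _ ≤ 1 := by
        rw [div_le_one (by positivity)]
        exact_mod_cast hn
  · simp [hout i hi j]

lemma K_isClosed (U : Finset (Fin n)) : IsClosed (K n U) := by
  have h : K n U =
      (⋂ i, ⋂ j, {x : Fin n → Fin n → ℝ | 0 ≤ x i j}) ∩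
      ((⋂ i ∈ U, {x : Fin n → Fin n → ℝ | ∑ j, x i j = 1 / (U.card : ℝ)}) ∩
      ((⋂ j, {x : Fin n → Fin n → ℝ | ∑ i ∈ U, x i j = 1 / (n : ℝ)}) ∩
      (⋂ i ∈ Uᶜ, ⋂ j, {x : Fin n → Fin n → ℝ | x i j = 0}))) := by
    ext x
    simp only [K, Set.mem_inter_iff, Set.mem_iInter, Set.mem_setOf_eq, Finset.mem_compl]
    try tauto
  rw [h]
  have heval : ∀ i j : Fin n, Continuous fun x : Fin n → Fin n → ℝ => x i j :=
    fun i j => (continuous_apply j).comp (continuous_apply i)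
  refine IsClosed.inter ?_ (IsClosed.inter ?_ (IsClosed.inter ?_ ?_))
  · exact isClosed_iInter fun i => isClosed_iInter fun j =>
      isClosed_le continuous_const (heval i j)
  · exact isClosed_iInter fun i => isClosed_iInter fun _ =>
      isClosed_eq (continuous_finset_sum _ fun j _ => heval i j) continuous_const
  · exact isClosed_iInter fun j =>
      isClosed_eq (continuous_finset_sum _ fun i _ => heval i j) continuous_const
  · exact isClosed_iInter fun i => isClosed_iInter fun _ => isClosed_iInter fun j =>
      isClosed_eq (heval i j) continuous_const

lemma K_isCompact (U : Finset (Fin n)) (hn : 0 < n) : IsCompact (K n U) := by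
  refine IsCompact.of_isClosed_subset (isCompact_Icc (a := (fun _ _ => 0 : Fin n → Fin n → ℝ))
    (b := (fun _ _ => 1 : Fin n → Fin n → ℝ))) (K_isClosed U) ?_
  intro x hx
  constructor
  · intro i; intro j; exact hx.1 i j
  · intro i; intro j; exact K_bounded U x hx hn i j


lemma exists_good_opt (d : Fin n → Fin n → ℝ)
    (d_self : ∀ i, d i i = 0)
    (d_triangle : ∀ i j l, d i l ≤ d i j + d j l)
    (U : Finset (Fin n)) (hm : 0 < U.card) (hmn : U.card < n) :
    ∃ x ∈ K n U, cost d U x = transportVal n d U ∧ (∀ i ∈ U, x i i = 1 / (n : ℝ)) := by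
  have hn : 0 < n := lt_of_le_of_lt (Nat.zero_le _) hmn
  have hKne := K_nonempty U hm hn
  have hKc := K_isCompact U hn
  obtain ⟨x₀, hx₀K, hx₀min⟩ := hKc.exists_isMinOn hKne (cost_continuous d U).continuousOn
  set v := cost d U x₀ with hv
  have hval : transportVal n d U = v := by
    rw [transportVal_eq_image]
    apply le_antisymm
    · exact csInf_le ⟨v, by rintro c ⟨x, hx, rfl⟩; exact hx₀min hx⟩ ⟨x₀, hx₀K, rfl⟩
    · exact le_csInf ⟨v, x₀, hx₀K, rfl⟩ (by rintro c ⟨x, hx, rfl⟩; exact hx₀min hx)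
  set K' := K n U ∩ {x | cost d U x = v} with hK'
  have hK'c : IsCompact K' :=
    hKc.inter_right (isClosed_eq (cost_continuous d U) continuous_const)
  have hK'ne : K'.Nonempty := ⟨x₀, hx₀K, rfl⟩
  obtain ⟨x, hxK', hxmax⟩ := hK'c.exists_isMaxOn hK'ne (trace_continuous U).continuousOn
  refine ⟨x, hxK'.1, by rw [hval]; exact hxK'.2, ?_⟩
  intro i₀ hi₀
  by_contra hne
  obtain ⟨hx0, hrow, hcol, hout⟩ := hxK'.1
  have hd : x i₀ i₀ ≤ 1 / (n : ℝ) := by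
    rw [← hcol i₀]; exact Finset.single_le_sum (fun i _ => hx0 i i₀) hi₀
  have hlt : x i₀ i₀ < 1 / (n : ℝ) := lt_of_le_of_ne hd hne
  -- find i₁ ∈ U, i₁ ≠ i₀, with x i₁ i₀ > 0
  have hcoleq : x i₀ i₀ + ∑ i ∈ U.erase i₀, x i i₀ = 1 / (n : ℝ) := by
    rw [Finset.add_sum_erase U (fun i => x i i₀) hi₀]; exact hcol i₀
  obtain ⟨i₁, hi₁mem, hi₁pos⟩ : ∃ i₁ ∈ U.erase i₀, 0 < x i₁ i₀ := by
    by_contra h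
    push_neg at h
    have : ∑ i ∈ U.erase i₀, x i i₀ ≤ 0 := Finset.sum_nonpos h
    linarith
  have hi₁U : i₁ ∈ U := Finset.mem_of_mem_erase hi₁mem
  have hi₁ne : i₁ ≠ i₀ := Finset.ne_of_mem_erase hi₁mem
  -- find t ≠ i₀ with x i₀ t > 0
  have h1m : (1 : ℝ) / n ≤ 1 / (U.card : ℝ) := by
    apply one_div_le_one_div_of_le (by exact_mod_cast hm)
    exact_mod_cast hmn.le
  have hroweq : x i₀ i₀ + ∑ j ∈ univ.erase i₀, x i₀ j = 1 / (U.card : ℝ) := by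
    rw [Finset.add_sum_erase univ (x i₀) (mem_univ i₀)]; exact hrow i₀ hi₀
  obtain ⟨t, htmem, htpos⟩ : ∃ t ∈ univ.erase i₀, 0 < x i₀ t := by
    by_contra h
    push_neg at h
    have : ∑ j ∈ univ.erase i₀, x i₀ j ≤ 0 := Finset.sum_nonpos h
    linarith
  have htne : t ≠ i₀ := Finset.ne_of_mem_erase htmem
  set ε := min (x i₁ i₀) (x i₀ t) with hεdef
  have hεpos : 0 < ε := lt_min hi₁pos htpos
  have hε1 : ε ≤ x i₁ i₀ := min_le_left _ _
  have hε2 : ε ≤ x i₀ t := min_le_right _ _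
  set y := fun i j => x i j +
      ε * (delta i₁ t i j + delta i₀ i₀ i j - delta i₁ i₀ i j - delta i₀ t i j) with hy
  have hyK : y ∈ K n U := by
    refine ⟨?_, ?_, ?_, ?_⟩
    · intro i j
      have hxij := hx0 i j
      simp only [hy]
      rcases eq_or_ne i i₁ with h1 | h1 <;> rcases eq_or_ne i i₀ with h2 | h2 <;>
        rcases eq_or_ne j i₀ with h3 | h3 <;> rcases eq_or_ne j t with h4 | h4 <;>
        simp only [delta, h1, h2, h3, h4, if_pos, if_neg, if_true, if_false] <;>
        simp only [if_neg hi₁ne, if_neg htne,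
          if_neg (show ¬ i₀ = i₁ from fun h => hi₁ne h.symm),
          if_neg (show ¬ i₀ = t from fun h => htne h.symm), if_pos rfl,
          mul_one, mul_zero, one_mul, zero_mul, add_zero, zero_add, sub_zero, zero_sub] <;>
        linarith [hx0 i j, hx0 i₁ i₀, hx0 i₀ t, hx0 i₁ t, hx0 i₀ i₀, hx0 i t,
          hx0 i i₀, hx0 i₁ j, hx0 i₀ j, hε1, hε2, hεpos.le]
    · intro i hi
      have : ∑ j, y i j = (∑ j, x i j) + ε * ((∑ j, delta i₁ t i j) +
          (∑ j, delta i₀ i₀ i j) - (∑ j, delta i₁ i₀ i j) - (∑ j, delta i₀ t i j)) := by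
        simp only [hy]
        rw [Finset.sum_add_distrib, ← Finset.mul_sum, Finset.sum_sub_distrib,
          Finset.sum_sub_distrib, Finset.sum_add_distrib]
      rw [this, delta_row, delta_row, delta_row, delta_row, hrow i hi]
      ring
    · intro j
      have : ∑ i ∈ U, y i j = (∑ i ∈ U, x i j) + ε * ((∑ i ∈ U, delta i₁ t i j) +
          (∑ i ∈ U, delta i₀ i₀ i j) - (∑ i ∈ U, delta i₁ i₀ i j) -
          (∑ i ∈ U, delta i₀ t i j)) := by
        simp only [hy]
        rw [Finset.sum_add_distrib, ← Finset.mul_sum, Finset.sum_sub_distrib,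
          Finset.sum_sub_distrib, Finset.sum_add_distrib]
      rw [this, delta_col U i₁ t j hi₁U, delta_col U i₀ i₀ j hi₀,
        delta_col U i₁ i₀ j hi₁U, delta_col U i₀ t j hi₀, hcol j]
      ring
    · intro i hi j
      have h1 : i ≠ i₁ := fun h => hi (h ▸ hi₁U)
      have h2 : i ≠ i₀ := fun h => hi (h ▸ hi₀)
      simp only [hy, delta, if_neg h1, if_neg h2, hout i hi j]
      ring
  have hcosty : cost d U y = v + ε * (d i₁ t + d i₀ i₀ - d i₁ i₀ - d i₀ t) := by
    have hterm : ∀ i j, d i j * y i j = d i j * x i j + ε * (d i j * delta i₁ t i j) +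
        ε * (d i j * delta i₀ i₀ i j) - ε * (d i j * delta i₁ i₀ i j) -
        ε * (d i j * delta i₀ t i j) := by
      intro i j; simp only [hy]; ring
    unfold cost
    rw [Finset.sum_congr rfl (fun i _ => Finset.sum_congr rfl (fun j _ => hterm i j))]
    simp only [Finset.sum_sub_distrib, Finset.sum_add_distrib, ← Finset.mul_sum]
    rw [delta_cost d U i₁ t hi₁U, delta_cost d U i₀ i₀ hi₀, delta_cost d U i₁ i₀ hi₁U,
      delta_cost d U i₀ t hi₀]
    have hcx : (∑ i ∈ U, ∑ j, d i j * x i j) = v := hxK'.2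
    rw [hcx]; ring
  have hyK' : y ∈ K' := by
    refine ⟨hyK, le_antisymm ?_ (hx₀min hyK)⟩
    rw [hcosty]
    have ht3 := d_triangle i₁ i₀ t
    have hs := d_self i₀
    nlinarith
  have htr : ∑ i ∈ U, y i i > ∑ i ∈ U, x i i := by
    have : ∑ i ∈ U, y i i = (∑ i ∈ U, x i i) + ε * ((∑ i ∈ U, delta i₁ t i i) +
        (∑ i ∈ U, delta i₀ i₀ i i) - (∑ i ∈ U, delta i₁ i₀ i i) -
        (∑ i ∈ U, delta i₀ t i i)) := by
      simp only [hy]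
      rw [Finset.sum_add_distrib, ← Finset.mul_sum, Finset.sum_sub_distrib,
        Finset.sum_sub_distrib, Finset.sum_add_distrib]
    rw [this, delta_trace U i₁ t hi₁U, delta_trace U i₀ i₀ hi₀,
      delta_trace U i₁ i₀ hi₁U, delta_trace U i₀ t hi₀]
    rw [if_pos rfl, if_neg (fun h : i₀ = i₁ => hi₁ne h.symm), if_neg htne]
    by_cases hti : t = i₁ <;> simp [hti] <;> nlinarith
  exact absurd (hxmax hyK') (not_le.mpr htr)


def RSet (d : Fin n → Fin n → ℝ) (U : Finset (Fin n)) : Set ℝ :=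
  {c | ∃ z : Fin n → Fin n → ℝ,
    (∀ i j, 0 ≤ z i j) ∧
    (∀ i ∈ U, ∑ j ∈ univ \ U, z i j = 1 / (U.card : ℝ) - 1 / n) ∧
    (∀ j ∈ univ \ U, ∑ i ∈ U, z i j = 1 / n) ∧
    c = ∑ i ∈ U, ∑ j ∈ univ \ U, d i j * z i j}

lemma card_sdiff_real (U : Finset (Fin n)) (hmn : U.card ≤ n) :
    ((univ \ U).card : ℝ) = (n : ℝ) - U.card := by
  rw [Finset.card_sdiff_of_subset (Finset.subset_univ U), Finset.card_univ, Fintype.card_fin]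
  push_cast [Nat.cast_sub hmn]
  ring

lemma RSet_nonempty (d : Fin n → Fin n → ℝ) (U : Finset (Fin n))
    (hm : 0 < U.card) (hmn : U.card < n) : (RSet d U).Nonempty := by
  have hn : 0 < n := lt_of_le_of_lt (Nat.zero_le _) hmn
  have hcard := card_sdiff_real U hmn.le
  have hm' : (0:ℝ) < U.card := by exact_mod_cast hm
  have hn' : (0:ℝ) < n := by exact_mod_cast hn
  have hnm : (0:ℝ) < (n:ℝ) - U.card := by
    have : (U.card : ℝ) < n := by exact_mod_cast hmn
    linarith
  have h1 : (1:ℝ)/n ≤ 1/U.card := by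
    apply one_div_le_one_div_of_le hm'
    exact_mod_cast hmn.le
  refine ⟨_, fun _ _ => (1 / (U.card : ℝ) - 1 / n) / ((n : ℝ) - U.card), ?_, ?_, ?_, rfl⟩
  · intro i j
    exact div_nonneg (by linarith) hnm.le
  · intro i _
    rw [Finset.sum_const, nsmul_eq_mul, hcard]
    field_simp
  · intro j _
    rw [Finset.sum_const, nsmul_eq_mul]
    field_simp

lemma reduction (d : Fin n → Fin n → ℝ)
    (d_nonneg : ∀ i j, 0 ≤ d i j) (d_self : ∀ i, d i i = 0)
    (d_triangle : ∀ i j l, d i l ≤ d i j + d j l)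
    (U : Finset (Fin n)) (hm : 0 < U.card) (hmn : U.card < n) :
    transportVal n d U = sInf (RSet d U) := by
  have hn : 0 < n := lt_of_le_of_lt (Nat.zero_le _) hmn
  have hSbdd : BddBelow {c : ℝ | ∃ x : Fin n → Fin n → ℝ,
      (∀ i j, 0 ≤ x i j) ∧
      (∀ i ∈ U, ∑ j, x i j = 1 / (U.card : ℝ)) ∧
      (∀ j, ∑ i ∈ U, x i j = 1 / (n : ℝ)) ∧
      c = ∑ i ∈ U, ∑ j, d i j * x i j} := by
    refine ⟨0, ?_⟩
    rintro c ⟨x, hx0, -, -, rfl⟩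
    exact Finset.sum_nonneg fun i _ => Finset.sum_nonneg fun j _ =>
      mul_nonneg (d_nonneg i j) (hx0 i j)
  have hRbdd : BddBelow (RSet d U) := by
    refine ⟨0, ?_⟩
    rintro c ⟨z, hz0, -, -, rfl⟩
    exact Finset.sum_nonneg fun i _ => Finset.sum_nonneg fun j _ =>
      mul_nonneg (d_nonneg i j) (hz0 i j)
  apply le_antisymm
  · -- transportVal ≤ sInf RSet
    apply le_csInf (RSet_nonempty d U hm hmn)
    rintro c ⟨z, hz0, hzrow, hzcol, rfl⟩
    have hmem : ∀ j : Fin n, j ∈ univ \ U ↔ j ∉ U := by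
      intro j; simp [Finset.mem_sdiff]
    set x : Fin n → Fin n → ℝ := fun i j =>
      if i ∈ U then ((if j = i then 1 / (n : ℝ) else 0) +
        (if j ∈ univ \ U then z i j else 0)) else 0 with hxdef
    have h0n : (0:ℝ) ≤ 1 / n := by positivity
    have hx0 : ∀ i j, 0 ≤ x i j := by
      intro i j
      simp only [hxdef]
      split_ifs <;> linarith [hz0 i j]
    have hxrow : ∀ i ∈ U, ∑ j, x i j = 1 / (U.card : ℝ) := by
      intro i hi
      simp only [hxdef]
      simp only [hi, if_true]
      rw [Finset.sum_add_distrib, Finset.sum_ite_eq' univ i (fun _ => 1/(n:ℝ)),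
        Finset.sum_ite_mem univ (univ \ U) (z i), Finset.univ_inter, hzrow i hi]
      simp
    have hxcol : ∀ j, ∑ i ∈ U, x i j = 1 / (n : ℝ) := by
      intro j
      simp only [hxdef]
      rw [Finset.sum_congr rfl (fun i hi => if_pos hi), Finset.sum_add_distrib]
      have e1 : ∑ i ∈ U, (if j = i then 1/(n:ℝ) else 0) = if j ∈ U then 1/(n:ℝ) else 0 :=
        Finset.sum_ite_eq U j (fun _ => 1/(n:ℝ))
      have e2 : ∑ i ∈ U, (if j ∈ univ \ U then z i j else 0)
          = if j ∈ U then 0 else 1/(n:ℝ) := by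
        by_cases hj : j ∈ U
        · have : j ∉ univ \ U := fun h => (hmem j).mp h hj
          simp [this, hj]
        · have hj' : j ∈ univ \ U := (hmem j).mpr hj
          simp only [hj', if_true, if_neg hj]
          exact hzcol j hj'
      rw [e1, e2]
      by_cases hj : j ∈ U <;> simp [hj]
    have hxcost : ∀ i ∈ U, ∑ j, d i j * x i j = ∑ j ∈ univ \ U, d i j * z i j := by
      intro i hi
      simp only [hxdef]
      simp only [hi, if_true, mul_add, mul_ite, mul_zero]
      rw [Finset.sum_add_distrib, Finset.sum_ite_eq' univ i (fun j => d i j * (1/(n:ℝ))),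
        Finset.sum_ite_mem univ (univ \ U) (fun j => d i j * z i j), Finset.univ_inter]
      simp [d_self i]
    calc transportVal n d U ≤ ∑ i ∈ U, ∑ j, d i j * x i j := by
          unfold transportVal
          exact csInf_le hSbdd ⟨x, hx0, hxrow, hxcol, rfl⟩
      _ = ∑ i ∈ U, ∑ j ∈ univ \ U, d i j * z i j :=
          Finset.sum_congr rfl (fun i hi => hxcost i hi)
  · -- sInf RSet ≤ transportVal
    obtain ⟨x, hxK, hxcost, hdiag⟩ := exists_good_opt d d_self d_triangle U hm hmn
    obtain ⟨hx0, hrow, hcol, hout⟩ := hxK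
    have hoff : ∀ i ∈ U, ∀ j ∈ U, j ≠ i → x j i = 0 := by
      intro i hi j hj hne
      have h1 : x i i + ∑ j' ∈ U.erase i, x j' i = 1/(n:ℝ) := by
        rw [Finset.add_sum_erase U (fun j' => x j' i) hi]
        exact hcol i
      have h2 : ∑ j' ∈ U.erase i, x j' i = 0 := by
        rw [hdiag i hi] at h1
        linarith
      exact (Finset.sum_eq_zero_iff_of_nonneg (fun j' _ => hx0 j' i)).mp h2 j
        (Finset.mem_erase.mpr ⟨hne, hj⟩)
    apply csInf_le hRbdd
    refine ⟨x, hx0, ?_, fun j _ => hcol j, ?_⟩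
    · intro i hi
      have hU : ∑ j ∈ U, x i j = x i i :=
        Finset.sum_eq_single_of_mem i hi
          (fun b hb hbne => hoff b hb i hi (fun h => hbne h.symm))
      have hsplit : ∑ j ∈ univ \ U, x i j + ∑ j ∈ U, x i j = ∑ j, x i j :=
        Finset.sum_sdiff (Finset.subset_univ U)
      rw [hrow i hi, hU, hdiag i hi] at hsplit
      linarith
    · rw [← hxcost]
      unfold cost
      apply Finset.sum_congr rfl
      intro i hi
      have hzero : ∑ j ∈ U, d i j * x i j = 0 := by
        apply Finset.sum_eq_zero
        intro b hb
        by_cases hbi : b = i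
        · rw [hbi, d_self i, zero_mul]
        · rw [hoff b hb i hi (fun h => hbi h.symm), mul_zero]
      have hsplit : ∑ j ∈ univ \ U, d i j * x i j + ∑ j ∈ U, d i j * x i j
          = ∑ j, d i j * x i j := Finset.sum_sdiff (Finset.subset_univ U)
      rw [hzero, add_zero] at hsplit
      exact hsplit.symm

lemma cost_transpose (d : Fin n → Fin n → ℝ) (d_symm : ∀ i j, d i j = d j i)
    (A B : Finset (Fin n)) (β : ℝ) (z : Fin n → Fin n → ℝ) :
    ∑ p ∈ B, ∑ q ∈ A, d p q * (β * z q p) = β * ∑ q ∈ A, ∑ p ∈ B, d q p * z q p := by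
  rw [Finset.sum_comm, Finset.mul_sum]
  refine Finset.sum_congr rfl fun q _ => ?_
  rw [Finset.mul_sum]
  refine Finset.sum_congr rfl fun p _ => ?_
  rw [d_symm p q]; ring

end Stmt14

/-- For a `k`-subset `T` of an `n`-point metric space with `k ≤ n/2`,
`M(T) = (n/k - 1)·M(S∖T)`; in particular `M(T) ≥ M(S∖T)`. -/
theorem stmt_14 (n k : ℕ) (d : Fin n → Fin n → ℝ)
    (d_nonneg : ∀ i j, 0 ≤ d i j) (d_self : ∀ i, d i i = 0)
    (d_symm : ∀ i j, d i j = d j i)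
    (d_triangle : ∀ i j l, d i l ≤ d i j + d j l)
    (T : Finset (Fin n)) (hT : T.card = k) (hk : 0 < k) (hkn : 2 * k ≤ n) :
    transportVal n d T = ((n : ℝ) / k - 1) * transportVal n d (Finset.univ \ T) ∧
      transportVal n d (Finset.univ \ T) ≤ transportVal n d T := by
  classical
  have hkn' : k < n := by omega
  have hn : 0 < n := by omega
  have hVcard : (Finset.univ \ T).card = n - k := by
    rw [Finset.card_sdiff_of_subset (Finset.subset_univ T), Finset.card_univ, Fintype.card_fin, hT]
  have hVpos : 0 < (Finset.univ \ T).card := by omega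
  have hVlt : (Finset.univ \ T).card < n := by omega
  have hTV : Finset.univ \ (Finset.univ \ T) = T := by
    rw [Finset.sdiff_sdiff_self_left, Finset.univ_inter]
  have hTpos : 0 < T.card := by omega
  have hTlt : T.card < n := by omega
  have h1 := Stmt14.reduction d d_nonneg d_self d_triangle T hTpos hTlt
  have h2 := Stmt14.reduction d d_nonneg d_self d_triangle (Finset.univ \ T) hVpos hVlt
  have hk0 : (0:ℝ) < k := by exact_mod_cast hk
  have hn0 : (0:ℝ) < n := by exact_mod_cast hn
  have hkR : (k:ℝ) < n := by exact_mod_cast hkn'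
  have hnk : (0:ℝ) < (n:ℝ) - k := by linarith
  have hTc : (T.card : ℝ) = k := by rw [hT]
  have hVc : ((Finset.univ \ T).card : ℝ) = (n:ℝ) - k := by
    rw [hVcard]
    push_cast [Nat.cast_sub hkn'.le]
    ring
  set a : ℝ := ((n:ℝ) - k) / k with ha
  have ha0 : 0 < a := div_pos hnk hk0
  have hset : Stmt14.RSet d T = a • Stmt14.RSet (n := n) d (Finset.univ \ T) := by
    ext c
    rw [Set.mem_smul_set]
    constructor
    · rintro ⟨z, hz0, hzrow, hzcol, rfl⟩
      refine ⟨_, ⟨fun p q => ((k:ℝ)/((n:ℝ)-k)) * z q p, ?_, ?_, ?_, rfl⟩, ?_⟩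
      · intro p q
        exact mul_nonneg (by positivity) (hz0 q p)
      · intro p hp
        rw [hTV, ← Finset.mul_sum]
        have : ∑ q ∈ T, z q p = 1 / (n:ℝ) := hzcol p hp
        rw [this, hVc]
        field_simp
        try ring
      · intro q hq
        rw [hTV] at hq
        rw [← Finset.mul_sum]
        have : ∑ p ∈ Finset.univ \ T, z q p = 1 / (T.card:ℝ) - 1 / n := hzrow q hq
        rw [this, hTc]
        field_simp
        try ring
      · rw [hTV, Stmt14.cost_transpose d d_symm T (Finset.univ \ T) ((k:ℝ)/((n:ℝ)-k)) z,
          smul_eq_mul, ← mul_assoc]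
        rw [show a * ((k:ℝ)/((n:ℝ)-k)) = 1 from by rw [ha]; field_simp, one_mul]
    · rintro ⟨b, ⟨w, hw0, hwrow, hwcol, rfl⟩, rfl⟩
      rw [hTV] at hwrow hwcol ⊢
      refine ⟨fun q p => a * w p q, ?_, ?_, ?_, ?_⟩
      · intro q p
        exact mul_nonneg ha0.le (hw0 p q)
      · intro q hq
        rw [← Finset.mul_sum]
        have : ∑ p ∈ Finset.univ \ T, w p q = 1 / (n:ℝ) := hwcol q hq
        rw [this, hTc, ha]
        field_simp
        try ring
      · intro p hp
        rw [← Finset.mul_sum]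
        have : ∑ q ∈ T, w p q = 1 / ((Finset.univ \ T).card : ℝ) - 1 / n := hwrow p hp
        rw [this, hVc, ha]
        field_simp
        try ring
      · rw [smul_eq_mul, Stmt14.cost_transpose d d_symm (Finset.univ \ T) T a w]
  have hval : transportVal n d T = a * transportVal n d (Finset.univ \ T) := by
    rw [h1, h2, hset, Real.sInf_smul_of_nonneg ha0.le, smul_eq_mul]
  have hnn : 0 ≤ transportVal n d (Finset.univ \ T) := by
    rw [h2]
    apply Real.sInf_nonneg
    rintro c ⟨z, hz0, -, -, rfl⟩
    exact Finset.sum_nonneg fun i _ => Finset.sum_nonneg fun j _ =>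
      mul_nonneg (d_nonneg i j) (hz0 i j)
  have hfac : (n:ℝ)/k - 1 = a := by
    rw [ha, div_sub_one hk0.ne']
  have ha1 : 1 ≤ a := by
    rw [ha, le_div_iff₀ hk0]
    have : (2*k : ℝ) ≤ n := by exact_mod_cast hkn
    linarith
  constructor
  · rw [hfac]; exact hval
  · nlinarith [hval, hnn, ha1]
end
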